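/- arXiv:1905.04869 — 10 statements merged into one kernel-verified Lean document; each statement's English description precedes it below -/
import Mathlib

section
/- Let a, q, α, β, γ, δ, ε be complex numbers with a ∉ {0,1}, αβ ≠ 0, satisfying the Fuchsian relation 1 + α + β = γ + δ + ε. Suppose y is holomorphic on an open set U ⊆ ℂ \ {0, 1, a} and satisfies the general Heun equation y''(z) + (γ/z + δ/(z−1) + ε/(z−a)) y'(z) + ((αβz − q)/(z(z−1)(z−a))) y(z) = 0 on U. Then the function v := y' satisfies, at every z ∈ U with αβz − q ≠ 0, the equation v''(z) + ((γ+1)/z + (δ+1)/(z−1) + (ε+1)/(z−a) − αβ/(αβz−q)) v'(z) + (f(z)/(z(z−1)(z−a)(αβz−q))) v(z) = 0, where f(z) = z(αβz − 2q)(αβ + γ + δ + ε) + q² + q(γ + a(γ+δ) + ε) − αβγa. -/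
private lemma heunAux1 (a q α β γ δ z : ℂ) (hz0 : z ≠ 0) (hz1' : z - 1 ≠ 0)
    (hza' : z - a ≠ 0) (hq : α * β * z - q ≠ 0) :
    ((γ + 1) / z + (δ + 1) / (z - 1) + (1 + α + β - γ - δ + 1) / (z - a))
      + ((α * β * (z * (z - 1) * (z - a)) - (α * β * z - q) *
          ((z - 1) * (z - a) + z * (z - a) + z * (z - 1))) / (z * (z - 1) * (z - a)) ^ 2)
        * (z * (z - 1) * (z - a)) / (α * β * z - q)
    = (γ / z + δ / (z - 1) + (1 + α + β - γ - δ) / (z - a)) + α * β / (α * β * z - q) := by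
  field_simp
  have hq' : z * α * β - q ≠ 0 := by rw [show z * α * β = α * β * z by ring]; exact hq
  field_simp
  ring

set_option maxHeartbeats 1000000 in
private lemma heunAux2 (a q α β γ δ z : ℂ) (hz0 : z ≠ 0) (hz1' : z - 1 ≠ 0)
    (hza' : z - a ≠ 0) (hq : α * β * z - q ≠ 0) :
    ((z * (α * β * z - 2 * q) * (α * β + γ + δ + (1 + α + β - γ - δ))
        + q ^ 2 + q * (γ + a * (γ + δ) + (1 + α + β - γ - δ)) - α * β * γ * a)
        / (z * (z - 1) * (z - a) * (α * β * z - q)))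
      + ((α * β * (z * (z - 1) * (z - a)) - (α * β * z - q) *
          ((z - 1) * (z - a) + z * (z - a) + z * (z - 1))) / (z * (z - 1) * (z - a)) ^ 2)
        * ((γ * (z - 1) + δ * z) * (z - a) + (1 + α + β - γ - δ) * (z * (z - 1))) / (α * β * z - q)
    = (-γ / z ^ 2 + -δ / (z - 1) ^ 2 + -(1 + α + β - γ - δ) / (z - a) ^ 2)
      + (α * β * z - q) / (z * (z - 1) * (z - a)) := by
  field_simp
  have hq' : z * α * β - q ≠ 0 := by rw [show z * α * β = α * β * z by ring]; exact hq
  field_simp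
  ring

set_option maxHeartbeats 1000000 in
/-- The derivative of a solution of the general Heun equation satisfies a second order
Fuchsian equation with five regular singular points. -/
theorem heun_deriv_equation
    (a q α β γ δ ε : ℂ) (ha0 : a ≠ 0) (ha1 : a ≠ 1) (hαβ : α * β ≠ 0)
    (hFuchs : 1 + α + β = γ + δ + ε)
    (U : Set ℂ) (hU : IsOpen U) (hUsub : U ⊆ ({0, 1, a} : Set ℂ)ᶜ)
    (y : ℂ → ℂ) (hy : DifferentiableOn ℂ y U)
    (hode : ∀ z ∈ U, deriv (deriv y) z
      + (γ / z + δ / (z - 1) + ε / (z - a)) * deriv y z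
      + ((α * β * z - q) / (z * (z - 1) * (z - a))) * y z = 0) :
    ∀ z ∈ U, α * β * z - q ≠ 0 →
      deriv (deriv (deriv y)) z
      + ((γ + 1) / z + (δ + 1) / (z - 1) + (ε + 1) / (z - a)
          - α * β / (α * β * z - q)) * deriv (deriv y) z
      + ((z * (α * β * z - 2 * q) * (α * β + γ + δ + ε)
            + q ^ 2 + q * (γ + a * (γ + δ) + ε) - α * β * γ * a)
          / (z * (z - 1) * (z - a) * (α * β * z - q))) * deriv y z = 0 := by
  intro z hz hq
  have hzm := hUsub hz
  simp only [Set.mem_compl_iff, Set.mem_insert_iff, Set.mem_singleton_iff, not_or] at hzm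
  obtain ⟨hz0, hz1, hza⟩ := hzm
  have hz1' : z - 1 ≠ 0 := sub_ne_zero.2 hz1
  have hza' : z - a ≠ 0 := sub_ne_zero.2 hza
  have hyan : AnalyticOnNhd ℂ y U := hy.analyticOnNhd hU
  have hy1 : AnalyticOnNhd ℂ (deriv y) U := hyan.deriv
  -- derivatives at points of U
  have Hy : ∀ w ∈ U, HasDerivAt y (deriv y w) w := fun w hw =>
    ((hyan w hw).differentiableAt).hasDerivAt
  have Hy1 : ∀ w ∈ U, HasDerivAt (deriv y) (deriv (deriv y) w) w := fun w hw =>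
    ((hy1 w hw).differentiableAt).hasDerivAt
  set P : ℂ → ℂ := fun w => γ / w + δ / (w - 1) + ε / (w - a) with hP
  set Q : ℂ → ℂ := fun w => (α * β * w - q) / (w * (w - 1) * (w - a)) with hQ
  have key : Set.EqOn (deriv (deriv y)) (fun w => -(P w * deriv y w + Q w * y w)) U := by
    intro w hw
    have h := hode w hw
    simp only [hP, hQ]
    linear_combination h
  have hder3 : deriv (deriv (deriv y)) z
      = deriv (fun w => -(P w * deriv y w + Q w * y w)) z := by
    apply Filter.EventuallyEq.deriv_eq
    exact Filter.eventuallyEq_of_mem (hU.mem_nhds hz) key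
  -- derivative of P at z
  have HP : HasDerivAt P (-γ / z ^ 2 + -δ / (z - 1) ^ 2 + -ε / (z - a) ^ 2) z := by
    have h1 : HasDerivAt (fun w : ℂ => γ / w) (-γ / z ^ 2) z := by
      simpa using ((hasDerivAt_const z γ).fun_div (hasDerivAt_id z) hz0)
    have h2 : HasDerivAt (fun w : ℂ => δ / (w - 1)) (-δ / (z - 1) ^ 2) z := by
      simpa using ((hasDerivAt_const z δ).fun_div ((hasDerivAt_id z).sub_const 1) hz1')
    have h3 : HasDerivAt (fun w : ℂ => ε / (w - a)) (-ε / (z - a) ^ 2) z := by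
      simpa using ((hasDerivAt_const z ε).fun_div ((hasDerivAt_id z).sub_const a) hza')
    exact (h1.add h2).add h3
  -- derivative of Q at z
  have hden : z * (z - 1) * (z - a) ≠ 0 := by
    exact mul_ne_zero (mul_ne_zero hz0 hz1') hza'
  have HN : HasDerivAt (fun w : ℂ => α * β * w - q) (α * β) z := by
    simpa using ((hasDerivAt_id z).const_mul (α * β)).sub_const q
  have HD : HasDerivAt (fun w : ℂ => w * (w - 1) * (w - a))
      ((z - 1) * (z - a) + z * (z - a) + z * (z - 1)) z := by
    have := ((hasDerivAt_id z).fun_mul ((hasDerivAt_id z).sub_const 1)).fun_mul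
      ((hasDerivAt_id z).sub_const a)
    convert this using 1
    · rfl
    · rfl
    · rfl
    simp only [id_eq]
    ring
  have HQ : HasDerivAt Q
      ((α * β * (z * (z - 1) * (z - a)) - (α * β * z - q) *
        ((z - 1) * (z - a) + z * (z - a) + z * (z - 1))) / (z * (z - 1) * (z - a)) ^ 2) z :=
    HN.div HD hden
  -- derivative of the RHS
  have Hg : HasDerivAt (fun w => -(P w * deriv y w + Q w * y w))
      (-(((-γ / z ^ 2 + -δ / (z - 1) ^ 2 + -ε / (z - a) ^ 2) * deriv y z
          + P z * deriv (deriv y) z)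
        + (((α * β * (z * (z - 1) * (z - a)) - (α * β * z - q) *
            ((z - 1) * (z - a) + z * (z - a) + z * (z - 1))) / (z * (z - 1) * (z - a)) ^ 2)
            * y z + Q z * deriv y z))) z :=
    ((HP.mul (Hy1 z hz)).add (HQ.mul (Hy z hz))).neg
  rw [hder3, Hg.deriv]
  have h0 := hode z hz
  have hQz : Q z = (α * β * z - q) / (z * (z - 1) * (z - a)) := rfl
  have hPz : P z = γ / z + δ / (z - 1) + ε / (z - a) := rfl
  rw [hQz, hPz] at *
  have hε : ε = 1 + α + β - γ - δ := by linear_combination -hFuchs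
  subst hε
  have h0' := h0
  field_simp at h0'
  have hy0 : y z = -(deriv (deriv y) z * (z * (z - 1) * (z - a))
      + ((γ * (z - 1) + δ * z) * (z - a) + (1 + α + β - γ - δ) * (z * (z - 1))) * deriv y z)
      / (α * β * z - q) := by
    rw [eq_div_iff hq]
    linear_combination h0'
  rw [hy0]
  linear_combination deriv (deriv y) z * heunAux1 a q α β γ δ z hz0 hz1' hza' hq
    + deriv y z * heunAux2 a q α β γ δ z hz0 hz1' hza' hq
end

section
/- Let α, γ, δ, ε, q be complex numbers with α ≠ 0. Suppose y is holomorphic on an open set U ⊆ ℂ \ {0, 1} and satisfies the confluent Heun equation y''(z) + (γ/z + δ/(z−1) + ε) y'(z) + ((αz − q)/(z(z−1))) y(z) = 0 on U. Then the function v := y' satisfies, at every z ∈ U with αz − q ≠ 0, the equation v''(z) + ((γ+1)/z + (δ+1)/(z−1) + ε − α/(αz−q)) v'(z) + (g(z)/(z(z−1)(αz−q))) v(z) = 0, where g(z) = (α+ε)(αz − 2q)z + q² − (γ + δ − ε)q + αγ. -/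
set_option maxHeartbeats 1000000 in

/-- The derivative of a solution of the confluent Heun equation satisfies a second order
linear equation with an extra apparent singularity at z = q/α. -/
theorem confluentHeun_deriv_equation
    (α γ δ ε q : ℂ) (hα : α ≠ 0)
    (U : Set ℂ) (hU : IsOpen U) (hUsub : U ⊆ ({0, 1} : Set ℂ)ᶜ)
    (y : ℂ → ℂ) (hy : DifferentiableOn ℂ y U)
    (hode : ∀ z ∈ U, deriv (deriv y) z
      + (γ / z + δ / (z - 1) + ε) * deriv y z
      + ((α * z - q) / (z * (z - 1))) * y z = 0) :
    ∀ z ∈ U, α * z - q ≠ 0 →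
      deriv (deriv (deriv y)) z
      + ((γ + 1) / z + (δ + 1) / (z - 1) + ε - α / (α * z - q)) * deriv (deriv y) z
      + (((α + ε) * (α * z - 2 * q) * z + q ^ 2 - (γ + δ - ε) * q + α * γ)
          / (z * (z - 1) * (α * z - q))) * deriv y z = 0 := by
  intro z hzU hq
  have hzc := hUsub hzU
  simp only [Set.mem_compl_iff, Set.mem_insert_iff, Set.mem_singleton_iff, not_or] at hzc
  obtain ⟨hz0, hz1⟩ := hzc
  have hz1' : z - 1 ≠ 0 := sub_ne_zero.mpr hz1
  have hzz : z * (z - 1) ≠ 0 := mul_ne_zero hz0 hz1'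
  -- analyticity
  have hyA : AnalyticOnNhd ℂ y U := hy.analyticOnNhd hU
  have hdyA : AnalyticOnNhd ℂ (deriv y) U := hyA.deriv
  have hddyA : AnalyticOnNhd ℂ (deriv (deriv y)) U := hdyA.deriv
  have hy1 : HasDerivAt y (deriv y z) z := (hyA z hzU).differentiableAt.hasDerivAt
  have hy2 : HasDerivAt (deriv y) (deriv (deriv y) z) z :=
    (hdyA z hzU).differentiableAt.hasDerivAt
  have hy3 : HasDerivAt (deriv (deriv y)) (deriv (deriv (deriv y)) z) z :=
    (hddyA z hzU).differentiableAt.hasDerivAt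
  -- derivative of coefficient A
  have hA : HasDerivAt (fun w : ℂ => γ / w + δ / (w - 1) + ε)
      (-(γ / z ^ 2) - δ / (z - 1) ^ 2) z := by
    have h1 := (hasDerivAt_const z γ).div (hasDerivAt_id z) hz0
    have h2 := (hasDerivAt_const z δ).div ((hasDerivAt_id z).sub_const 1) hz1'
    have := (h1.add h2).add_const ε
    refine this.congr_deriv ?_
    simp only [id_eq]
    ring
  -- derivative of coefficient B
  have hB : HasDerivAt (fun w : ℂ => (α * w - q) / (w * (w - 1)))
      ((α * (z * (z - 1)) - (α * z - q) * (2 * z - 1)) / (z * (z - 1)) ^ 2) z := by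
    have hn := ((hasDerivAt_id z).const_mul α).sub_const q
    have hd := (hasDerivAt_id z).mul ((hasDerivAt_id z).sub_const 1)
    have := hn.div hd hzz
    refine this.congr_deriv ?_
    simp only [id_eq, Pi.mul_apply]
    ring
  -- differentiate the ODE
  have hsum : HasDerivAt (fun w => deriv (deriv y) w
      + (γ / w + δ / (w - 1) + ε) * deriv y w
      + ((α * w - q) / (w * (w - 1))) * y w)
      (deriv (deriv (deriv y)) z
        + ((-(γ / z ^ 2) - δ / (z - 1) ^ 2) * deriv y z
          + (γ / z + δ / (z - 1) + ε) * deriv (deriv y) z)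
        + (((α * (z * (z - 1)) - (α * z - q) * (2 * z - 1)) / (z * (z - 1)) ^ 2) * y z
          + ((α * z - q) / (z * (z - 1))) * deriv y z)) z :=
    (hy3.add (hA.mul hy2)).add (hB.mul hy1)
  have heq : (fun w => deriv (deriv y) w
      + (γ / w + δ / (w - 1) + ε) * deriv y w
      + ((α * w - q) / (w * (w - 1))) * y w) =ᶠ[nhds z] (fun _ => (0 : ℂ)) := by
    filter_upwards [hU.mem_nhds hzU] with w hw using hode w hw
  have hzero : HasDerivAt (fun w => deriv (deriv y) w
      + (γ / w + δ / (w - 1) + ε) * deriv y w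
      + ((α * w - q) / (w * (w - 1))) * y w) 0 z :=
    (hasDerivAt_const z (0 : ℂ)).congr_of_eventuallyEq heq
  have e2 := hsum.unique hzero
  have e1 := hode z hzU
  field_simp at e1 e2
  have hq' : z * α - q ≠ 0 := by rwa [mul_comm] at hq
  field_simp
  apply mul_left_cancel₀ hzz
  linear_combination (α * z - q) * e2 + (α * z ^ 2 - 2 * q * z + q) * e1
end

section
/- Let U ⊆ ℝ be open, β a nonzero real constant, and let P, Q, A, B, V, S be functions on U with P, Q, A, B differentiable on U and A nowhere vanishing on U. Suppose that on U: (i) P' = −B·P + β·A·Q; (ii) Q' = (B + V)·Q − Ã·P for some function Ã; and (iii) B² + V·B + S = β·A·Ã. Then P satisfies the second order linear equation P'' − (V + A'/A)·P' + (B' − B·(A'/A) + S)·P = 0 on U. -/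
/-- Elimination of Q from the two ladder-operator relations, together with the
supplementary condition (S₂'), yields a second order linear ODE for P. -/
theorem ladder_elimination_second_order_ode
    (U : Set ℝ) (hU : IsOpen U) (β : ℝ) (hβ : β ≠ 0)
    (P Q A B V S Atil : ℝ → ℝ)
    (hP : DifferentiableOn ℝ P U) (hQ : DifferentiableOn ℝ Q U)
    (hA : DifferentiableOn ℝ A U) (hB : DifferentiableOn ℝ B U)
    (hA0 : ∀ x ∈ U, A x ≠ 0)
    (h1 : ∀ x ∈ U, deriv P x = - B x * P x + β * A x * Q x)
    (h2 : ∀ x ∈ U, deriv Q x = (B x + V x) * Q x - Atil x * P x)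
    (h3 : ∀ x ∈ U, (B x) ^ 2 + V x * B x + S x = β * A x * Atil x) :
    ∀ x ∈ U, deriv (deriv P) x - (V x + deriv A x / A x) * deriv P x
      + (deriv B x - B x * (deriv A x / A x) + S x) * P x = 0 := by
  intro x hx
  have hxU : U ∈ nhds x := hU.mem_nhds hx
  have hPx := ((hP x hx).differentiableAt hxU).hasDerivAt
  have hQx := ((hQ x hx).differentiableAt hxU).hasDerivAt
  have hAx := ((hA x hx).differentiableAt hxU).hasDerivAt
  have hBx := ((hB x hx).differentiableAt hxU).hasDerivAt
  have hEq : deriv P =ᶠ[nhds x] fun y => -B y * P y + β * A y * Q y := by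
    filter_upwards [hxU] with y hy
    simpa using h1 y hy
  have hD : HasDerivAt (fun y => -B y * P y + β * A y * Q y)
      ((-(deriv B x) * P x + (-B x) * deriv P x)
        + ((β * deriv A x) * Q x + (β * A x) * deriv Q x)) x :=
    (hBx.neg.mul hPx).add ((hAx.const_mul β).mul hQx)
  have hDD : deriv (deriv P) x
      = (-(deriv B x) * P x + (-B x) * deriv P x)
        + ((β * deriv A x) * Q x + (β * A x) * deriv Q x) := by
    rw [hEq.deriv_eq]; exact hD.deriv
  rw [hDD, h1 x hx, h2 x hx]
  have h3' := h3 x hx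
  have hA0' := hA0 x hx
  field_simp
  linear_combination (A x * P x) * h3'
end

section
/- Let α, β > 0 and let (P_n) be the monic orthogonal polynomials with respect to the weight w(x) = x^α(1−x)^β on [0,1], with h_n := ∫_0^1 P_n(x)² w(x) dx. Define R_n := (α/h_n) ∫_0^1 (P_n(y)²/y) y^α(1−y)^β dy. Then R_n = 2n + 1 + α + β for every n ≥ 0. -/
open MeasureTheory Polynomial Set

lemma jac_meas (q : Polynomial ℝ) (s t : ℝ) :
    Measurable (fun x : ℝ => q.eval x * (x ^ s * (1 - x) ^ t)) := by
  exact (q.continuous_aeval).measurable.mul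
    ((measurable_id.pow_const s).mul ((measurable_const.sub measurable_id).pow_const t))

lemma jac_integrable (q : Polynomial ℝ) {s t : ℝ} (hs : -1 < s) (ht : 0 ≤ t) :
    IntervalIntegrable (fun x => q.eval x * (x ^ s * (1 - x) ^ t)) volume 0 1 := by
  obtain ⟨C, hC⟩ := (isCompact_Icc (a := (0:ℝ)) (b := 1)).exists_bound_of_continuousOn
    (q.continuous_aeval).continuousOn
  have hint : IntervalIntegrable (fun x : ℝ => |C| * x ^ s) volume 0 1 :=
    (intervalIntegral.intervalIntegrable_rpow' hs).const_mul _
  refine hint.mono_fun ((jac_meas q s t).aestronglyMeasurable) ?_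
  rw [Filter.EventuallyLE, ae_restrict_iff' measurableSet_uIoc]
  filter_upwards with x hx
  rw [Set.uIoc_of_le (by norm_num : (0:ℝ) ≤ 1)] at hx
  obtain ⟨hx0, hx1⟩ := hx
  have h1 : (0:ℝ) ≤ 1 - x := by linarith
  have h2 : (1 - x) ^ t ≤ 1 := Real.rpow_le_one h1 (by linarith) ht
  have h3 : (0:ℝ) ≤ x ^ s := Real.rpow_nonneg hx0.le _
  have h4 : (0:ℝ) ≤ (1 - x) ^ t := Real.rpow_nonneg h1 _
  have h5 : |q.eval x| ≤ |C| := le_trans (by simpa using hC x ⟨hx0.le, hx1⟩) (le_abs_self C)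
  simp only [norm_mul, Real.norm_eq_abs]
  rw [abs_of_nonneg h3, abs_of_nonneg h4, abs_of_nonneg (abs_nonneg C)]
  calc |q.eval x| * (x ^ s * (1 - x) ^ t) ≤ |C| * (x ^ s * 1) := by
        apply mul_le_mul h5 _ (by positivity) (abs_nonneg C)
        exact mul_le_mul_of_nonneg_left h2 h3
    _ = |C| * x ^ s := by ring

lemma jac_orth_ext {α β : ℝ} (hα : 0 < α) (hβ : 0 < β) {n : ℕ} {p : Polynomial ℝ}
    (horth : ∀ k < n, ∫ x in (0:ℝ)..1, p.eval x * x ^ k * (x ^ α * (1 - x) ^ β) = 0)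
    (q : Polynomial ℝ) (hq : q.degree < n) :
    ∫ x in (0:ℝ)..1, p.eval x * q.eval x * (x ^ α * (1 - x) ^ β) = 0 := by
  rcases eq_or_ne q 0 with rfl | hq0
  · simp
  have hnd : q.natDegree < n := (Polynomial.natDegree_lt_iff_degree_lt hq0).2 hq
  have key : ∀ x : ℝ, p.eval x * q.eval x * (x ^ α * (1 - x) ^ β)
      = ∑ k ∈ Finset.range n, q.coeff k * (p.eval x * x ^ k * (x ^ α * (1 - x) ^ β)) := by
    intro x
    rw [Polynomial.eval_eq_sum_range' hnd, Finset.mul_sum, Finset.sum_mul]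
    refine Finset.sum_congr rfl fun k _ => by ring
  simp_rw [key]
  have hik : ∀ k : ℕ, IntervalIntegrable
      (fun x => p.eval x * x ^ k * (x ^ α * (1 - x) ^ β)) volume 0 1 := by
    intro k
    have := jac_integrable (p * X ^ k) (by linarith : (-1:ℝ) < α) hβ.le
    simpa [mul_assoc] using this
  rw [intervalIntegral.integral_finset_sum]
  · refine Finset.sum_eq_zero fun k hk => ?_
    rw [intervalIntegral.integral_const_mul, horth k (Finset.mem_range.1 hk), mul_zero]
  · intro k _
    exact (hik k).const_mul _

lemma jac_pos {α β : ℝ} (hα : 0 < α) (hβ : 0 < β) {p : Polynomial ℝ} (hp : p ≠ 0) :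
    0 < ∫ x in (0:ℝ)..1, (p.eval x) ^ 2 * (x ^ α * (1 - x) ^ β) := by
  set f : ℝ → ℝ := fun x => (p.eval x) ^ 2 * (x ^ α * (1 - x) ^ β) with hf
  have hfi : IntervalIntegrable f volume 0 1 := by
    have := jac_integrable (p ^ 2) (by linarith : (-1:ℝ) < α) hβ.le
    simpa [hf] using this
  rw [intervalIntegral.integral_of_le (by norm_num : (0:ℝ) ≤ 1)]
  have hfi' : IntegrableOn f (Ioc 0 1) volume :=
    (intervalIntegrable_iff_integrableOn_Ioc_of_le (by norm_num)).1 hfi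
  rw [setIntegral_pos_iff_support_of_nonneg_ae ?_ hfi']
  · -- measure of support positive
    have hsub : Ioo (0:ℝ) 1 \ {x | p.IsRoot x} ⊆ Function.support f ∩ Ioc 0 1 := by
      rintro x ⟨⟨hx0, hx1⟩, hxr⟩
      refine ⟨?_, hx0, hx1.le⟩
      have h1 : (0:ℝ) < 1 - x := by linarith
      have : p.eval x ≠ 0 := hxr
      have : 0 < f x := by
        apply mul_pos (by positivity)
        exact mul_pos (Real.rpow_pos_of_pos hx0 _) (Real.rpow_pos_of_pos h1 _)
      exact this.ne'
    have hroots : volume {x : ℝ | p.IsRoot x} = 0 :=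
      (Polynomial.finite_setOf_isRoot hp).measure_zero _
    have : volume (Ioo (0:ℝ) 1 \ {x | p.IsRoot x}) = 1 := by
      rw [measure_diff_null hroots]; simp
    calc (0:ENNReal) < 1 := by norm_num
      _ = volume (Ioo (0:ℝ) 1 \ {x | p.IsRoot x}) := this.symm
      _ ≤ volume (Function.support f ∩ Ioc 0 1) := measure_mono hsub
  · rw [Filter.EventuallyLE, ae_restrict_iff' measurableSet_Ioc]
    filter_upwards with x hx
    have h1 : (0:ℝ) ≤ 1 - x := by linarith [hx.2]
    have := Real.rpow_nonneg hx.1.le α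
    have := Real.rpow_nonneg h1 β
    positivity

lemma jac_ftc {α β : ℝ} (hα : 0 < α) (hβ : 0 < β) (p : Polynomial ℝ) :
    (∫ x in (0:ℝ)..1, (2 * p * p.derivative).eval x * (x ^ α * (1 - x) ^ (β+1)))
      + α * (∫ x in (0:ℝ)..1, (p ^ 2).eval x * (x ^ (α-1) * (1 - x) ^ (β+1)))
      - (β+1) * (∫ x in (0:ℝ)..1, (p ^ 2).eval x * (x ^ α * (1 - x) ^ β)) = 0 := by
  set T1 : ℝ → ℝ := fun x => (2 * p * p.derivative).eval x * (x ^ α * (1 - x) ^ (β+1)) with hT1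
  set T2 : ℝ → ℝ := fun x => (p ^ 2).eval x * (x ^ (α-1) * (1 - x) ^ (β+1)) with hT2
  set T3 : ℝ → ℝ := fun x => (p ^ 2).eval x * (x ^ α * (1 - x) ^ β) with hT3
  have i1 : IntervalIntegrable T1 volume 0 1 := jac_integrable _ (by linarith) (by linarith)
  have i2 : IntervalIntegrable T2 volume 0 1 := jac_integrable _ (by linarith) (by linarith)
  have i3 : IntervalIntegrable T3 volume 0 1 := jac_integrable _ (by linarith) (by linarith)
  set g : ℝ → ℝ := fun x => (p.eval x) ^ 2 * (x ^ α * (1 - x) ^ (β+1)) with hg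
  set g' : ℝ → ℝ := fun x => T1 x + α * T2 x - (β+1) * T3 x with hg'
  have hgderiv : ∀ x ∈ Ioo (0:ℝ) 1, HasDerivAt g (g' x) x := by
    intro x hx
    have hx0 : x ≠ 0 := hx.1.ne'
    have hx1 : (1:ℝ) - x ≠ 0 := ne_of_gt (by linarith [hx.2])
    have h1 : HasDerivAt (fun x : ℝ => (p.eval x) ^ 2)
        (2 * (p.eval x) ^ 1 * p.derivative.eval x) x := (p.hasDerivAt x).pow 2
    have h2 : HasDerivAt (fun x : ℝ => x ^ α) (α * x ^ (α - 1)) x :=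
      Real.hasDerivAt_rpow_const (Or.inl hx0)
    have h3i : HasDerivAt (fun x : ℝ => 1 - x) (-1) x := (hasDerivAt_id x).const_sub 1
    have h3 : HasDerivAt (fun x : ℝ => (1 - x) ^ (β+1))
        ((β+1) * (1 - x) ^ (β + 1 - 1) * (-1)) x :=
      (Real.hasDerivAt_rpow_const (x := 1 - x) (p := β+1) (Or.inl hx1)).comp x h3i
    have := h1.mul (h2.mul h3)
    refine this.congr_deriv ?_
    simp only [g', T1, T2, T3, add_sub_cancel_right, Pi.mul_apply]
    simp only [Polynomial.eval_mul, Polynomial.eval_pow, Polynomial.eval_ofNat]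
    ring
  have hcont : ContinuousOn g (Icc (0:ℝ) 1) := by
    apply Continuous.continuousOn
    exact ((p.continuous_aeval).pow 2).mul
      ((Real.continuous_rpow_const hα.le).mul
        ((Real.continuous_rpow_const (by linarith)).comp (continuous_const.sub continuous_id)))
  have hint : IntervalIntegrable g' volume 0 1 :=
    ((i1.add (i2.const_mul α)).sub (i3.const_mul (β+1)))
  have hftc := intervalIntegral.integral_eq_sub_of_hasDeriv_right_of_le
    (by norm_num : (0:ℝ) ≤ 1) hcont
    (fun x hx => (hgderiv x hx).hasDerivWithinAt) hint
  have hg1 : g 1 = 0 := by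
    simp [hg, Real.zero_rpow (by positivity : β + 1 ≠ 0)]
  have hg0 : g 0 = 0 := by
    simp [hg, Real.zero_rpow hα.ne']
  rw [hg1, hg0, sub_zero] at hftc
  calc (∫ x in (0:ℝ)..1, T1 x) + α * (∫ x in (0:ℝ)..1, T2 x)
        - (β+1) * (∫ x in (0:ℝ)..1, T3 x)
      = ∫ x in (0:ℝ)..1, g' x := by
        rw [intervalIntegral.integral_sub (i1.add (i2.const_mul α)) (i3.const_mul (β+1)),
          intervalIntegral.integral_add i1 (i2.const_mul α),
          intervalIntegral.integral_const_mul, intervalIntegral.integral_const_mul]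
    _ = 0 := hftc

lemma jac_B {α β : ℝ} (hα : 0 < α) (hβ : 0 < β) {n : ℕ} {p : Polynomial ℝ}
    (hm : p.Monic) (hd : p.natDegree = n)
    (horth : ∀ k < n, ∫ x in (0:ℝ)..1, p.eval x * x ^ k * (x ^ α * (1 - x) ^ β) = 0) :
    ∫ x in (0:ℝ)..1, p.eval x * x ^ n * (x ^ α * (1 - x) ^ β)
      = ∫ x in (0:ℝ)..1, (p.eval x) ^ 2 * (x ^ α * (1 - x) ^ β) := by
  have hp0 : p ≠ 0 := hm.ne_zero
  have hsub : (X ^ n - p).degree < (n : WithBot ℕ) := by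
    have := Polynomial.degree_sub_lt (p := (X : ℝ[X]) ^ n) (q := p)
      (by rw [degree_X_pow, Polynomial.degree_eq_natDegree hp0, hd])
      (by exact pow_ne_zero _ X_ne_zero)
      (by rw [leadingCoeff_X_pow, hm.leadingCoeff])
    rwa [degree_X_pow] at this
  have h0 := jac_orth_ext hα hβ horth (X ^ n - p) hsub
  have key : ∀ x : ℝ, p.eval x * (X ^ n - p : ℝ[X]).eval x * (x ^ α * (1 - x) ^ β)
      = p.eval x * x ^ n * (x ^ α * (1 - x) ^ β)
        - (p.eval x) ^ 2 * (x ^ α * (1 - x) ^ β) := by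
    intro x; simp only [eval_sub, eval_pow, eval_X]; ring
  simp_rw [key] at h0
  have i1 : IntervalIntegrable (fun x => p.eval x * x ^ n * (x ^ α * (1 - x) ^ β)) volume 0 1 := by
    have := jac_integrable (p * X ^ n) (by linarith : (-1:ℝ) < α) hβ.le
    simpa [mul_assoc] using this
  have i2 : IntervalIntegrable (fun x => (p.eval x) ^ 2 * (x ^ α * (1 - x) ^ β)) volume 0 1 := by
    have := jac_integrable (p ^ 2) (by linarith : (-1:ℝ) < α) hβ.le
    simpa using this
  rw [intervalIntegral.integral_sub i1 i2] at h0
  linarith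

lemma jac_A {α β : ℝ} (hα : 0 < α) (hβ : 0 < β) {n : ℕ} {p : Polynomial ℝ}
    (hm : p.Monic) (hd : p.natDegree = n)
    (horth : ∀ k < n, ∫ x in (0:ℝ)..1, p.eval x * x ^ k * (x ^ α * (1 - x) ^ β) = 0) :
    ∫ x in (0:ℝ)..1, p.eval x * ((C 2 * ((1 - X) * p.derivative)).eval x) * (x ^ α * (1 - x) ^ β)
      = -(2 * n) * ∫ x in (0:ℝ)..1, (p.eval x) ^ 2 * (x ^ α * (1 - x) ^ β) := by
  rcases Nat.eq_zero_or_pos n with rfl | hn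
  · have hp1 : p = 1 := hm.natDegree_eq_zero.mp hd
    subst hp1
    simp
  -- S has degree < n
  set S : ℝ[X] := C 2 * ((1 - X) * p.derivative) + C (2 * (n:ℝ)) * X ^ n with hS
  have hSdeg : S.degree < (n : WithBot ℕ) := by
    rw [Polynomial.degree_lt_iff_coeff_zero]
    intro m hnm
    obtain ⟨m', rfl⟩ : ∃ m', m = m' + 1 := ⟨m - 1, by omega⟩
    have e1 : p.derivative.coeff (m' + 1) = 0 := by
      rw [coeff_derivative]
      have : p.coeff (m' + 1 + 1) = 0 :=
        coeff_eq_zero_of_natDegree_lt (by omega)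
      rw [this, zero_mul]
    have e2 : (X * p.derivative).coeff (m' + 1) = p.derivative.coeff m' := coeff_X_mul _ _
    have e3 : p.derivative.coeff m' = p.coeff (m' + 1) * (m' + 1) := coeff_derivative _ _
    simp only [hS, coeff_add, coeff_C_mul, sub_mul, one_mul, coeff_sub, e1, e2, e3,
      coeff_X_pow]
    rcases eq_or_lt_of_le hnm with heq | hlt
    · have hc : p.coeff (m' + 1) = 1 := by
        rw [← heq, ← hd]; exact hm.coeff_natDegree
      rw [hc, if_pos heq.symm, heq]
      push_cast
      ring
    · have hc : p.coeff (m' + 1) = 0 := coeff_eq_zero_of_natDegree_lt (by omega)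
      rw [hc, if_neg (by omega)]
      simp
  have h0 := jac_orth_ext hα hβ horth S hSdeg
  have key : ∀ x : ℝ, p.eval x * S.eval x * (x ^ α * (1 - x) ^ β)
      = p.eval x * ((C 2 * ((1 - X) * p.derivative)).eval x) * (x ^ α * (1 - x) ^ β)
        + (2 * (n:ℝ)) * (p.eval x * x ^ n * (x ^ α * (1 - x) ^ β)) := by
    intro x
    simp only [hS, eval_add, eval_mul, eval_C, eval_sub, eval_one, eval_X, eval_pow]
    ring
  simp_rw [key] at h0
  have i1 : IntervalIntegrable
      (fun x => p.eval x * ((C 2 * ((1 - X) * p.derivative)).eval x) * (x ^ α * (1 - x) ^ β))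
      volume 0 1 := by
    have := jac_integrable (p * (C 2 * ((1 - X) * p.derivative)))
      (by linarith : (-1:ℝ) < α) hβ.le
    simpa [mul_assoc] using this
  have i2 : IntervalIntegrable
      (fun x => (2 * (n:ℝ)) * (p.eval x * x ^ n * (x ^ α * (1 - x) ^ β))) volume 0 1 := by
    have := jac_integrable (p * X ^ n) (by linarith : (-1:ℝ) < α) hβ.le
    exact ((by simpa [mul_assoc] using this : IntervalIntegrable
      (fun x => p.eval x * x ^ n * (x ^ α * (1 - x) ^ β)) volume 0 1)).const_mul _
  rw [intervalIntegral.integral_add i1 i2, intervalIntegral.integral_const_mul,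
    jac_B hα hβ hm hd horth] at h0
  linarith


open MeasureTheory

/-- For the Jacobi weight x^α (1-x)^β on [0,1], the auxiliary quantity R_n equals
2n + 1 + α + β. -/
theorem jacobi_auxiliary_Rn_value
    (α β : ℝ) (hα : 0 < α) (hβ : 0 < β)
    (P : ℕ → Polynomial ℝ)
    (hmonic : ∀ n, (P n).Monic) (hdeg : ∀ n, (P n).natDegree = n)
    (horth : ∀ n, ∀ k < n, ∫ x in (0:ℝ)..1, (P n).eval x * x ^ k * (x ^ α * (1 - x) ^ β) = 0)
    (h : ℕ → ℝ)
    (hh : ∀ n, h n = ∫ x in (0:ℝ)..1, ((P n).eval x) ^ 2 * (x ^ α * (1 - x) ^ β))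
    (R : ℕ → ℝ)
    (hR : ∀ n, R n = (α / h n) *
      ∫ y in (0:ℝ)..1, (((P n).eval y) ^ 2 / y) * (y ^ α * (1 - y) ^ β)) :
    ∀ n, R n = 2 * n + 1 + α + β := by
  intro n
  set p : ℝ[X] := P n with hp
  have hm : p.Monic := hmonic n
  have hd : p.natDegree = n := hdeg n
  have hor := horth n
  have hn0 : 0 < h n := by rw [hh n]; exact jac_pos hα hβ hm.ne_zero
  -- pointwise rpow identities on [0,1]
  have hpow1 : ∀ x ∈ Icc (0:ℝ) 1, (1 - x) ^ (β+1) = (1 - x) ^ β * (1 - x) := by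
    intro x hx
    rcases eq_or_ne x 1 with rfl | hx1
    · simp [Real.zero_rpow (by positivity : β + 1 ≠ 0), Real.zero_rpow hβ.ne']
    · exact Real.rpow_add_one (sub_ne_zero.2 (Ne.symm hx1)) β
  have hpow2 : ∀ x : ℝ, x ^ (α-1) * x = x ^ α := by
    intro x
    rcases eq_or_ne x 0 with rfl | hx0
    · simp [Real.zero_rpow hα.ne']
    · rw [← Real.rpow_add_one hx0]; ring_nf
  -- main FTC identity
  have hftc := jac_ftc hα hβ (p := p)
  simp only [Polynomial.eval_pow] at hftc
  set I : ℝ := ∫ x in (0:ℝ)..1, (p.eval x) ^ 2 * (x ^ (α-1) * (1 - x) ^ β) with hI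
  -- first integral equals -(2n) h n
  have e1 : (∫ x in (0:ℝ)..1, (2 * p * p.derivative).eval x * (x ^ α * (1 - x) ^ (β+1)))
      = -(2 * n) * h n := by
    rw [intervalIntegral.integral_congr (g := fun x =>
      p.eval x * ((C 2 * ((1 - X) * p.derivative)).eval x) * (x ^ α * (1 - x) ^ β)) ?_,
      jac_A hα hβ hm hd hor, hh n]
    intro x hx
    rw [Set.uIcc_of_le (by norm_num : (0:ℝ) ≤ 1)] at hx
    simp only [eval_mul, eval_C, eval_sub, eval_one, eval_X, eval_ofNat]
    rw [hpow1 x hx]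
    ring
  -- second integral equals I - h n
  have e2 : (∫ x in (0:ℝ)..1, (p.eval x) ^ 2 * (x ^ (α-1) * (1 - x) ^ (β+1)))
      = I - h n := by
    rw [intervalIntegral.integral_congr (g := fun x =>
      (p.eval x) ^ 2 * (x ^ (α-1) * (1 - x) ^ β)
        - (p.eval x) ^ 2 * (x ^ α * (1 - x) ^ β)) ?_]
    · have ia : IntervalIntegrable
          (fun x => (p.eval x) ^ 2 * (x ^ (α-1) * (1 - x) ^ β)) volume 0 1 := by
        have := jac_integrable (p ^ 2) (by linarith : (-1:ℝ) < α - 1) hβ.le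
        simpa using this
      have ib : IntervalIntegrable
          (fun x => (p.eval x) ^ 2 * (x ^ α * (1 - x) ^ β)) volume 0 1 := by
        have := jac_integrable (p ^ 2) (by linarith : (-1:ℝ) < α) hβ.le
        simpa using this
      rw [intervalIntegral.integral_sub ia ib, ← hI, hh n]
    · intro x hx
      rw [Set.uIcc_of_le (by norm_num : (0:ℝ) ≤ 1)] at hx
      dsimp only
      rw [hpow1 x hx, ← hpow2 x]
      ring
  rw [e1, e2, hh n] at hftc
  rw [← hh n] at hftc
  -- hftc : -(2n) h n + α (I - h n) - (β+1) h n = 0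
  -- the R-integral equals I
  have eJ : (∫ y in (0:ℝ)..1, ((p.eval y) ^ 2 / y) * (y ^ α * (1 - y) ^ β)) = I := by
    rw [hI, intervalIntegral.integral_of_le (by norm_num : (0:ℝ) ≤ 1),
      intervalIntegral.integral_of_le (by norm_num : (0:ℝ) ≤ 1)]
    apply setIntegral_congr_fun measurableSet_Ioc
    intro y hy
    have hy0 : (0:ℝ) < y := hy.1
    dsimp only
    rw [Real.rpow_sub hy0, Real.rpow_one]
    field_simp
  rw [hR n, ← hp, eJ]
  have hcast : ((n : ℝ)) = (n : ℝ) := rfl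
  field_simp
  nlinarith [hftc, hn0]
end

section
/- Let α, β > 0 and let R be a differentiable real function on an open interval I ⊆ (0,∞) such that R(t) ≠ 0 and R(t) ≠ t for all t ∈ I, and suppose R satisfies the Riccati equation t R'(t) = R(t)² − (α + β + t − 1) R(t) + α t on I. Then R is twice differentiable on I and satisfies, for all t ∈ I, the second order nonlinear equation 2 t² (R − t) R · R'' = (2R − t)(t R')² − 2 t R² R' + 2 R⁵ − 2 α² t² R + α² t³ − (2(α+β−1) + 5t) R⁴ + 4 t (α + β − 1 + t) R³ − (t³ + 2 t² (α+β−1) − t(1 + α² − β²)) R², i.e. R satisfies the nonlinear equation for the auxiliary quantity R_n associated with the weight x^α(1−x)^β e^{−tx} specialized to n = −1 (so that 2n + 1 + α + β = α + β − 1). -/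
/-- A solution of the Riccati equation t R' = R² − (α+β+t−1) R + αt solves the
second order nonlinear equation for the auxiliary quantity R_n of the weight
x^α (1-x)^β e^{-tx}, specialized to n = −1. -/
theorem riccati_solves_nonlinear_Rn_jacobi
    (α β : ℝ) (hα : 0 < α) (hβ : 0 < β)
    (I : Set ℝ) (hI : IsOpen I) (hIconn : I.OrdConnected) (hIsub : I ⊆ Set.Ioi 0)
    (R : ℝ → ℝ) (hdiff : DifferentiableOn ℝ R I)
    (hR0 : ∀ t ∈ I, R t ≠ 0) (hRt : ∀ t ∈ I, R t ≠ t)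
    (hric : ∀ t ∈ I, t * deriv R t = (R t) ^ 2 - (α + β + t - 1) * R t + α * t) :
    ∀ t ∈ I, DifferentiableAt ℝ (deriv R) t ∧
      2 * t ^ 2 * (R t - t) * R t * deriv (deriv R) t
        = (2 * R t - t) * (t * deriv R t) ^ 2 - 2 * t * (R t) ^ 2 * deriv R t
          + 2 * (R t) ^ 5 - 2 * α ^ 2 * t ^ 2 * R t + α ^ 2 * t ^ 3
          - (2 * (α + β - 1) + 5 * t) * (R t) ^ 4
          + 4 * t * (α + β - 1 + t) * (R t) ^ 3
          - (t ^ 3 + 2 * t ^ 2 * (α + β - 1) - t * (1 + α ^ 2 - β ^ 2)) * (R t) ^ 2 := by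
  intro t ht
  have ht0 : (0:ℝ) < t := hIsub ht
  have htne : t ≠ 0 := ne_of_gt ht0
  have hmem : I ∈ nhds t := hI.mem_nhds ht
  have hRd : DifferentiableAt ℝ R t := (hdiff t ht).differentiableAt hmem
  set r := deriv R t with hrdef
  have hRdd : HasDerivAt R r t := hRd.hasDerivAt
  set num : ℝ → ℝ := fun s => (R s) ^ 2 - (α + β + s - 1) * R s + α * s with hnumdef
  have hr : t * r = num t := hric t ht
  have hlin : HasDerivAt (fun s : ℝ => α + β + s - 1) 1 t := by
    simpa using (((hasDerivAt_id t).const_add (α + β)).sub_const 1)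
  have hαs : HasDerivAt (fun s : ℝ => α * s) α t := by
    simpa using (hasDerivAt_id t).const_mul α
  have hpow : HasDerivAt (fun s => (R s) ^ 2) (2 * R t * r) t := by
    have := hRdd.fun_pow 2
    simpa [mul_comm, mul_assoc, mul_left_comm] using this
  set num' : ℝ := 2 * R t * r - (1 * R t + (α + β + t - 1) * r) + α with hnum'def
  have hnum : HasDerivAt num num' t := (hpow.sub (hlin.mul hRdd)).add hαs
  have hg : HasDerivAt (fun s => num s / s) ((num' * t - num t * 1) / t ^ 2) t :=
    hnum.div (hasDerivAt_id t) htne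
  have heq : deriv R =ᶠ[nhds t] fun s => num s / s := by
    filter_upwards [hmem] with s hs
    have hs0 : s ≠ 0 := ne_of_gt (hIsub hs)
    rw [eq_div_iff hs0]
    have := hric s hs
    simp only [hnumdef]
    linarith [this]
  have hdiff2 : DifferentiableAt ℝ (deriv R) t :=
    (heq.differentiableAt_iff).mpr hg.differentiableAt
  have hd2 : deriv (deriv R) t = (num' * t - num t * 1) / t ^ 2 := by
    rw [heq.deriv_eq]
    exact hg.deriv
  refine ⟨hdiff2, ?_⟩
  have key : 2 * t ^ 2 * (R t - t) * R t * deriv (deriv R) t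
      = 2 * (R t - t) * R t * (num' * t - num t) := by
    rw [hd2]
    field_simp
  rw [key]
  simp only [hnum'def, hnumdef] at *
  linear_combination (t * (t - 2 * R t) * r
      + 2 * R t * ((R t - t) * (2 * R t - (α + β + t - 1)) + R t)
      + (t - 2 * R t) * ((R t) ^ 2 - (α + β + t - 1) * R t + α * t)) * hr
end

section
/- Let α, β > 0 and define R(t) := α t M(β; α+β+1; t) / ((α+β) M(β; α+β; t)), where M is Kummer's confluent hypergeometric function. Then on any open interval of ℝ on which M(β; α+β; t) ≠ 0, R satisfies the Riccati equation t R'(t) = R(t)² − (α + β + t − 1) R(t) + α t. -/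
/-- Kummer's confluent hypergeometric function of the first kind,
M(a; b; t) = Σ_{k≥0} ((a)_k/(b)_k) t^k / k!. -/
noncomputable def kummerM (a b t : ℝ) : ℝ :=
  ∑' k : ℕ, ((ascPochhammer ℝ k).eval a / (ascPochhammer ℝ k).eval b) * t ^ k / (Nat.factorial k)

open Polynomial in
noncomputable def pch (x : ℝ) (k : ℕ) : ℝ := (ascPochhammer ℝ k).eval x

lemma pch_zero (x : ℝ) : pch x 0 = 1 := by simp [pch]
lemma pch_succ (x : ℝ) (k : ℕ) : pch x (k+1) = pch x k * (x + k) :=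
  ascPochhammer_succ_eval k x
lemma pch_succ_left (x : ℝ) (k : ℕ) : pch x (k+1) = x * pch (x+1) k := by
  simp [pch, ascPochhammer_succ_left, Polynomial.eval_comp]

lemma pch_pos {x : ℝ} (hx : 0 < x) (k : ℕ) : 0 < pch x k := by
  induction k with
  | zero => simp [pch_zero]
  | succ k ih => rw [pch_succ]; positivity

lemma pch_le {a b : ℝ} (ha : 0 < a) (hab : a ≤ b) (k : ℕ) : pch a k ≤ pch b k := by
  induction k with
  | zero => simp [pch_zero]
  | succ k ih =>
    rw [pch_succ, pch_succ]
    have := pch_pos ha k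
    have h2 : (0:ℝ) < a + k := by positivity
    nlinarith [pch_pos (lt_of_lt_of_le ha hab) k]

noncomputable def cf (a b : ℝ) (k : ℕ) : ℝ := pch a k / pch b k / (Nat.factorial k)

lemma cf_pos {a b : ℝ} (ha : 0 < a) (hb : 0 < b) (k : ℕ) : 0 < cf a b k := by
  have := pch_pos ha k; have := pch_pos hb k
  have : (0:ℝ) < (Nat.factorial k : ℝ) := by positivity
  unfold cf; positivity

lemma cube_le (k : ℕ) : ((k:ℝ)+1) * ((k:ℝ)+2) * ((k:ℝ)+3) ≤ 6 * 4 ^ k := by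
  induction k with
  | zero => norm_num
  | succ k ih =>
    push_cast
    have hk : (0:ℝ) ≤ k := Nat.cast_nonneg k
    have : (4:ℝ)^(k+1) = 4 * 4^k := by ring
    rw [this]
    nlinarith [pow_pos (by norm_num : (0:ℝ) < 4) k]

lemma master {a b : ℝ} (ha : 0 < a) (hb : 0 < b) (hab : a ≤ b) {r : ℝ} (hr : 0 < r) :
    Summable (fun k : ℕ => ((k:ℝ)+1) * ((k:ℝ)+2) * ((k:ℝ)+3) * cf a b k * r ^ k) := by
  refine Summable.of_nonneg_of_le (fun k => by have := (cf_pos ha hb k).le; positivity)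
    (fun k => ?_) ((Real.summable_pow_div_factorial (4*r)).mul_left 6)
  have h1 : cf a b k ≤ 1 / (Nat.factorial k : ℝ) := by
    have hp := pch_pos hb k
    have hf : (0:ℝ) < (Nat.factorial k : ℝ) := by positivity
    unfold cf
    rw [div_le_div_iff₀ (by positivity) hf]
    calc pch a k / pch b k * (Nat.factorial k : ℝ)
        ≤ 1 * (Nat.factorial k : ℝ) := by
          gcongr
          exact div_le_one_of_le₀ (pch_le ha hab k) hp.le
      _ = 1 * (Nat.factorial k : ℝ) := by ring
  have h2 := cube_le k
  have hf : (0:ℝ) < (Nat.factorial k : ℝ) := by positivity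
  have hcp := (cf_pos ha hb k).le
  calc ((k:ℝ)+1) * ((k:ℝ)+2) * ((k:ℝ)+3) * cf a b k * r ^ k
      ≤ (6 * 4^k) * (1 / (Nat.factorial k : ℝ)) * r ^ k := by
        have h3 : (0:ℝ) ≤ r ^ k := by positivity
        have h4 : (0:ℝ) ≤ 6*4^k := by positivity
        exact mul_le_mul (mul_le_mul h2 h1 hcp h4) le_rfl h3 (by positivity)
    _ = 6 * ((4*r)^k / (Nat.factorial k : ℝ)) := by rw [mul_pow]; ring

lemma summable_aux {c : ℕ → ℝ}
    (hc : ∀ r : ℝ, 0 < r → Summable (fun k : ℕ => |c k| * ((k:ℝ)+1) * r ^ k)) (t : ℝ) :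
    Summable (fun k : ℕ => c k * t ^ k) := by
  refine Summable.of_norm_bounded (hc (|t|+1) (by positivity)) (fun k => ?_)
  rw [norm_mul, norm_pow]
  have h1 : |t| ^ k ≤ (|t|+1) ^ k := pow_le_pow_left₀ (abs_nonneg t) (by linarith) k
  have h2 : (1:ℝ) ≤ (k:ℝ)+1 := by have := Nat.cast_nonneg (α := ℝ) k; linarith
  calc |c k| * |t| ^ k ≤ |c k| * ((|t|+1) ^ k) :=
        mul_le_mul_of_nonneg_left h1 (abs_nonneg _)
    _ ≤ |c k| * (((k:ℝ)+1) * (|t|+1) ^ k) :=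
        mul_le_mul_of_nonneg_left (le_mul_of_one_le_left (by positivity) h2) (abs_nonneg _)
    _ = |c k| * ((k:ℝ)+1) * (|t|+1) ^ k := by ring

lemma hasDerivAt_psum {c : ℕ → ℝ}
    (hc : ∀ r : ℝ, 0 < r → Summable (fun k : ℕ => |c k| * ((k:ℝ)+1) * r ^ k)) (t : ℝ) :
    HasDerivAt (fun x => ∑' k : ℕ, c k * x ^ k) (∑' k : ℕ, ((k:ℝ)+1) * c (k+1) * t ^ k) t := by
  set r : ℝ := |t| + 1 with hrdef
  have hr1 : (1:ℝ) ≤ r := by have := abs_nonneg t; simp only [hrdef]; linarith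
  have hr0 : (0:ℝ) < r := by positivity
  have hbound : ∀ n : ℕ, ∀ y : ℝ, y ∈ Set.Ioo (-r) r →
      ‖c n * ((n:ℝ) * y ^ (n-1))‖ ≤ |c n| * ((n:ℝ)+1) * r ^ n := by
    intro n y hy
    have hyr : |y| ≤ r := by
      rw [abs_le]; exact ⟨hy.1.le, hy.2.le⟩
    rw [norm_mul, norm_mul, norm_pow]
    simp only [Real.norm_natCast, Real.norm_eq_abs]
    have h1 : |y| ^ (n-1) ≤ r ^ n := by
      calc |y| ^ (n-1) ≤ r ^ (n-1) := pow_le_pow_left₀ (abs_nonneg y) hyr _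
        _ ≤ r ^ n := pow_le_pow_right₀ hr1 (Nat.sub_le n 1)
    have h2 : (n:ℝ) ≤ (n:ℝ)+1 := by linarith
    have h3 : |(n:ℝ)| = (n:ℝ) := abs_of_nonneg (Nat.cast_nonneg n)
    rw [h3]
    calc |c n| * ((n:ℝ) * |y| ^ (n-1)) ≤ |c n| * (((n:ℝ)+1) * r ^ n) := by
          have := abs_nonneg (c n)
          have h4 : (n:ℝ) * |y| ^ (n-1) ≤ ((n:ℝ)+1) * r ^ n := by
            have hn0 : (0:ℝ) ≤ (n:ℝ) := Nat.cast_nonneg n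
            have hp : (0:ℝ) ≤ |y| ^ (n-1) := by positivity
            nlinarith [pow_nonneg hr0.le n]
          exact mul_le_mul_of_nonneg_left h4 this
      _ = |c n| * ((n:ℝ)+1) * r ^ n := by ring
  have h0 : Summable (fun n : ℕ => c n * (0:ℝ) ^ n) := by
    apply summable_of_ne_finset_zero (s := {0})
    intro n hn
    simp only [Finset.mem_singleton] at hn
    rw [zero_pow hn, mul_zero]
  have key := hasDerivAt_tsum_of_isPreconnected (hc r hr0) isOpen_Ioo
    (isPreconnected_Ioo) (fun n y _ => (hasDerivAt_pow n y).const_mul (c n))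
    hbound (y₀ := 0) (by constructor <;> [linarith; linarith])
    h0 (y := t) (by constructor <;> [nlinarith [abs_nonneg t, neg_abs_le t]; nlinarith [le_abs_self t]])
  have hs : Summable (fun n : ℕ => c n * ((n:ℝ) * t ^ (n-1))) := by
    refine Summable.of_norm_bounded (hc r hr0) (fun n => ?_)
    exact hbound n t (by constructor <;> [nlinarith [abs_nonneg t, neg_abs_le t]; nlinarith [le_abs_self t]])
  have heq : (∑' n : ℕ, c n * ((n:ℝ) * t ^ (n-1))) = ∑' k : ℕ, ((k:ℝ)+1) * c (k+1) * t ^ k := by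
    rw [Summable.tsum_eq_zero_add hs]
    simp only [Nat.cast_zero, zero_mul, mul_zero, zero_add]
    exact tsum_congr (fun k => by push_cast; ring)
  rw [← heq]
  exact key

lemma coeff1 {b : ℝ} (a : ℝ) (hb : 0 < b) (k : ℕ) :
    ((k:ℝ)+1) * cf a b (k+1) * (b + k) = cf a b k * (a + k) := by
  have h1 := pch_pos hb k
  have h2 : (0:ℝ) < (Nat.factorial k : ℝ) := by positivity
  have h3 : (0:ℝ) < b + k := by positivity
  unfold cf
  rw [pch_succ, pch_succ]
  rw [Nat.factorial_succ]
  push_cast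
  field_simp

lemma coeff2 {b : ℝ} (a : ℝ) (hb : 0 < b) (k : ℕ) :
    cf a (b+1) k * (b + k) = cf a b k * b := by
  have h1 := pch_pos hb k
  have h1' := pch_pos (by linarith : (0:ℝ) < b + 1) k
  have h2 : (0:ℝ) < (Nat.factorial k : ℝ) := by positivity
  have h3 : (0:ℝ) < b + k := by positivity
  have hpb : pch (b+1) k * b = pch b k * (b + k) := by
    have := pch_succ_left b k
    have h5 := pch_succ b k
    nlinarith [this, h5]
  unfold cf
  field_simp
  linear_combination (-(pch a k)) * hpb

lemma hc_master {a b : ℝ} (ha : 0 < a) (hb : 0 < b) (hab : a ≤ b) :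
    ∀ r : ℝ, 0 < r → Summable (fun k : ℕ => |cf a b k| * ((k:ℝ)+1) * r ^ k) := by
  intro r hr
  refine Summable.of_nonneg_of_le (fun k => by positivity) (fun k => ?_) (master ha hb hab hr)
  have hk1 : (0:ℝ) ≤ (k:ℝ) := Nat.cast_nonneg k
  have hcp := (cf_pos ha hb k).le
  rw [abs_of_nonneg hcp]
  have hrp : (0:ℝ) ≤ r ^ k := by positivity
  nlinarith [mul_nonneg (mul_nonneg hcp hrp) hk1, mul_nonneg hcp hrp,
    mul_nonneg (mul_nonneg (mul_nonneg hcp hrp) hk1) hk1,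
    mul_nonneg (mul_nonneg (mul_nonneg (mul_nonneg hcp hrp) hk1) hk1) hk1]

lemma hc_shift {a b : ℝ} (ha : 0 < a) (hb : 0 < b) (hab : a ≤ b) :
    ∀ r : ℝ, 0 < r →
      Summable (fun k : ℕ => |((k:ℝ)+1) * cf a b (k+1)| * ((k:ℝ)+1) * r ^ k) := by
  intro r hr
  have hm := (master ha hb hab hr)
  have hm1 : Summable (fun k : ℕ =>
      (1/r) * (((k+1:ℕ):ℝ)+1) * (((k+1:ℕ):ℝ)+2) * (((k+1:ℕ):ℝ)+3) * cf a b (k+1) * r ^ (k+1)) := by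
    have := ((summable_nat_add_iff 1).mpr hm)
    have h2 := this.mul_left (1/r)
    refine h2.congr (fun k => ?_)
    push_cast
    ring
  refine Summable.of_nonneg_of_le (fun k => by positivity) (fun k => ?_) hm1
  have hk1 : (0:ℝ) ≤ (k:ℝ) := Nat.cast_nonneg k
  have hcp := (cf_pos ha hb (k+1)).le
  have hk2 : (0:ℝ) ≤ ((k:ℝ)+1) * cf a b (k+1) := by positivity
  rw [abs_of_nonneg hk2]
  have hrp : (0:ℝ) ≤ r ^ k := by positivity
  have key : ((k:ℝ)+1) * cf a b (k+1) * ((k:ℝ)+1) ≤ ((k:ℝ)+2) * ((k:ℝ)+3) * ((k:ℝ)+4) * cf a b (k+1) := by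
    nlinarith [mul_nonneg hcp hk1, hcp, mul_nonneg (mul_nonneg hcp hk1) hk1]
  have hR : 1 / r * (((k+1:ℕ):ℝ)+1) * (((k+1:ℕ):ℝ)+2) * (((k+1:ℕ):ℝ)+3) * cf a b (k+1) * r ^ (k+1)
      = ((k:ℝ)+2) * ((k:ℝ)+3) * ((k:ℝ)+4) * cf a b (k+1) * r ^ k := by
    push_cast
    rw [pow_succ]
    field_simp
    ring
  rw [hR]
  exact mul_le_mul_of_nonneg_right key hrp

lemma t_mul_shift {c : ℕ → ℝ} {t : ℝ} (hs : Summable (fun k : ℕ => (k:ℝ) * c k * t ^ k)) :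
    t * (∑' k : ℕ, ((k:ℝ)+1) * c (k+1) * t ^ k) = ∑' k : ℕ, (k:ℝ) * c k * t ^ k := by
  rw [Summable.tsum_eq_zero_add hs]
  simp only [Nat.cast_zero, zero_mul, zero_add]
  rw [← tsum_mul_left]
  exact tsum_congr (fun k => by push_cast; ring)

noncomputable def Mf (a b : ℝ) : ℝ → ℝ := fun t => ∑' k : ℕ, cf a b k * t ^ k
noncomputable def Df (a b : ℝ) : ℝ → ℝ := fun t => ∑' k : ℕ, ((k:ℝ)+1) * cf a b (k+1) * t ^ k
noncomputable def D2f (a b : ℝ) : ℝ → ℝ :=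
  fun t => ∑' k : ℕ, ((k:ℝ)+1) * ((((k+1:ℕ):ℝ)+1) * cf a b (k+1+1)) * t ^ k

lemma summable_k_aux {c : ℕ → ℝ}
    (hc : ∀ r : ℝ, 0 < r → Summable (fun k : ℕ => |c k| * ((k:ℝ)+1) * r ^ k)) (t : ℝ) :
    Summable (fun k : ℕ => (k:ℝ) * c k * t ^ k) := by
  refine Summable.of_norm_bounded (hc (|t|+1) (by positivity)) (fun k => ?_)
  rw [norm_mul, norm_mul, norm_pow]
  simp only [Real.norm_natCast, Real.norm_eq_abs, Nat.abs_cast]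
  have h1 : |t| ^ k ≤ (|t|+1) ^ k := pow_le_pow_left₀ (abs_nonneg t) (by linarith) k
  have h2 : (k:ℝ) ≤ (k:ℝ)+1 := by linarith
  calc (k:ℝ) * |c k| * |t| ^ k ≤ ((k:ℝ)+1) * |c k| * (|t|+1) ^ k := by
        have := abs_nonneg (c k)
        have := Nat.cast_nonneg (α := ℝ) k
        have hp : (0:ℝ) ≤ |t| ^ k := by positivity
        have hq : (0:ℝ) ≤ (|t|+1) ^ k := by positivity
        nlinarith [mul_nonneg (abs_nonneg (c k)) hq,
          mul_nonneg (mul_nonneg (Nat.cast_nonneg (α := ℝ) k) (abs_nonneg (c k))) hq,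
          mul_le_mul_of_nonneg_left h1 (mul_nonneg (Nat.cast_nonneg (α := ℝ) k) (abs_nonneg (c k)))]
    _ = |c k| * ((k:ℝ)+1) * (|t|+1) ^ k := by ring

lemma kummerM_eq (a b t : ℝ) : kummerM a b t = Mf a b t :=
  tsum_congr fun k => by unfold cf pch; ring

lemma hasDerivAt_Mf {a b : ℝ} (ha : 0 < a) (hb : 0 < b) (hab : a ≤ b) (t : ℝ) :
    HasDerivAt (Mf a b) (Df a b t) t :=
  hasDerivAt_psum (hc_master ha hb hab) t

lemma hasDerivAt_Df {a b : ℝ} (ha : 0 < a) (hb : 0 < b) (hab : a ≤ b) (t : ℝ) :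
    HasDerivAt (Df a b) (D2f a b t) t :=
  hasDerivAt_psum (c := fun k => ((k:ℝ)+1) * cf a b (k+1)) (hc_shift ha hb hab) t

lemma idA (α β : ℝ) (hα : 0 < α) (hβ : 0 < β) (x : ℝ) :
    (α+β) * Df β (α+β) x = (α+β) * Mf β (α+β) x - α * Mf β (α+β+1) x := by
  have hb : (0:ℝ) < α+β := by linarith
  have hab : β ≤ α+β := by linarith
  have hab1 : β ≤ α+β+1 := by linarith
  have hb1 : (0:ℝ) < α+β+1 := by linarith
  have S1 : Summable (fun k : ℕ => cf β (α+β) k * x ^ k) :=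
    summable_aux (hc_master hβ hb hab) x
  have S2 : Summable (fun k : ℕ => cf β (α+β+1) k * x ^ k) :=
    summable_aux (hc_master hβ hb1 hab1) x
  unfold Df Mf
  rw [← tsum_mul_left, ← tsum_mul_left (a := α+β), ← tsum_mul_left (a := α),
    ← Summable.tsum_sub (S1.mul_left (α+β)) (S2.mul_left α)]
  refine tsum_congr fun k => ?_
  have h1 := coeff1 β hb k
  have h2 := coeff2 β hb k
  have hbk : (α+β) + (k:ℝ) ≠ 0 := by positivity
  have hcoef : (α+β) * (((k:ℝ)+1) * cf β (α+β) (k+1))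
      = (α+β) * cf β (α+β) k - α * cf β (α+β+1) k := by
    apply mul_right_cancel₀ hbk
    linear_combination (α+β) * h1 + α * h2
  linear_combination x ^ k * hcoef

lemma odeM (α β : ℝ) (hα : 0 < α) (hβ : 0 < β) (t : ℝ) :
    t * D2f β (α+β) t + (α+β) * Df β (α+β) t
      = t * Df β (α+β) t + β * Mf β (α+β) t := by
  have hb : (0:ℝ) < α+β := by linarith
  have hab : β ≤ α+β := by linarith
  have S1 : Summable (fun k : ℕ => cf β (α+β) k * t ^ k) :=
    summable_aux (hc_master hβ hb hab) t
  have S2 : Summable (fun k : ℕ => (((k:ℝ)+1) * cf β (α+β) (k+1)) * t ^ k) :=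
    summable_aux (hc_shift hβ hb hab) t
  have S3 : Summable (fun k : ℕ => (k:ℝ) * cf β (α+β) k * t ^ k) :=
    summable_k_aux (hc_master hβ hb hab) t
  have S4 : Summable (fun k : ℕ => (k:ℝ) * (((k:ℝ)+1) * cf β (α+β) (k+1)) * t ^ k) :=
    summable_k_aux (hc_shift hβ hb hab) t
  have e1 : t * D2f β (α+β) t
      = ∑' k : ℕ, (k:ℝ) * (((k:ℝ)+1) * cf β (α+β) (k+1)) * t ^ k :=
    t_mul_shift (c := fun k => ((k:ℝ)+1) * cf β (α+β) (k+1)) S4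
  have e2 : t * Df β (α+β) t = ∑' k : ℕ, (k:ℝ) * cf β (α+β) k * t ^ k :=
    t_mul_shift (c := fun k => cf β (α+β) k) S3
  rw [e1, e2]
  unfold Df Mf
  rw [← tsum_mul_left (a := α+β), ← tsum_mul_left (a := β),
    ← Summable.tsum_add S4 (S2.mul_left (α+β)),
    ← Summable.tsum_add S3 (S1.mul_left β)]
  refine tsum_congr fun k => ?_
  have h1 := coeff1 β hb k
  linear_combination t ^ k * h1

/-- The ratio R(t) = α t M(β; α+β+1; t) / ((α+β) M(β; α+β; t)) satisfies the Riccati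
equation t R' = R² − (α+β+t−1) R + α t. -/
theorem kummer_ratio_riccati_jacobi
    (α β : ℝ) (hα : 0 < α) (hβ : 0 < β)
    (I : Set ℝ) (hI : IsOpen I) (hIconn : I.OrdConnected)
    (hM : ∀ t ∈ I, kummerM β (α + β) t ≠ 0)
    (R : ℝ → ℝ)
    (hR : ∀ t, R t = α * t * kummerM β (α + β + 1) t / ((α + β) * kummerM β (α + β) t)) :
    ∀ t ∈ I, t * deriv R t = (R t) ^ 2 - (α + β + t - 1) * R t + α * t := by
  have hb : (0:ℝ) < α + β := by linarith
  have hab : β ≤ α + β := by linarith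
  have hM1 : ∀ x ∈ I, Mf β (α+β) x ≠ 0 := fun x hx => by
    rw [← kummerM_eq]; exact hM x hx
  have hRI : ∀ x ∈ I, R x = x - x * Df β (α+β) x / Mf β (α+β) x := by
    intro x hx
    rw [hR, kummerM_eq, kummerM_eq]
    have h := idA α β hα hβ x
    have hm := hM1 x hx
    field_simp
    linear_combination x * h
  intro t ht
  have h1 := hasDerivAt_Mf hβ hb hab t
  have h2 := hasDerivAt_Df hβ hb hab t
  have h3 : HasDerivAt (fun x => x * Df β (α+β) x)
      (1 * Df β (α+β) t + t * D2f β (α+β) t) t := (hasDerivAt_id t).mul h2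
  have h4 := h3.div h1 (hM1 t ht)
  have h5 := (hasDerivAt_id t).sub h4
  have heq : R =ᶠ[nhds t] (fun x => x - x * Df β (α+β) x / Mf β (α+β) x) := by
    filter_upwards [hI.mem_nhds ht] with x hx using hRI x hx
  have hR' := h5.congr_of_eventuallyEq heq
  rw [hR'.deriv, hRI t ht]
  have hode := odeM α β hα hβ t
  have hm := hM1 t ht
  set m := Mf β (α+β) t
  set d := Df β (α+β) t
  set d2 := D2f β (α+β) t
  field_simp
  ring_nf
  linear_combination (-(t * m)) * hode
end

section
/- Let α, λ > 0 and define R(t) := λ M(α; α+λ+1; t) / ((α+λ) M(α; α+λ; t)), where M is Kummer's confluent hypergeometric function. Then on any open interval of ℝ on which M(α; α+λ; t) ≠ 0, R satisfies the Riccati equation t R'(t) = t R(t)² − (α + λ + t) R(t) + λ. -/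
namespace KRR

lemma summable_bnd (r : ℝ) (hr : 0 ≤ r) :
    Summable fun k : ℕ => (1 / (Nat.factorial k) : ℝ) * ((k : ℝ) * r ^ (k - 1)) := by
  rw [← summable_nat_add_iff 1]
  have : (fun n : ℕ => (1 / (Nat.factorial (n + 1)) : ℝ) * (((n : ℝ) + 1) * r ^ n))
      = fun n : ℕ => r ^ n / (Nat.factorial n) := by
    funext n
    have h1 : (Nat.factorial (n + 1) : ℝ) = ((n : ℝ) + 1) * Nat.factorial n := by
      rw [Nat.factorial_succ]; push_cast; ring
    have h2 : ((n : ℝ) + 1) ≠ 0 := by positivity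
    have h3 : (Nat.factorial n : ℝ) ≠ 0 := by positivity
    rw [h1]
    field_simp
  simp only [Nat.add_sub_cancel, Nat.cast_add, Nat.cast_one]
  rw [this]
  exact Real.summable_pow_div_factorial r

lemma summable_ser (c : ℕ → ℝ) (h : ∀ k, |c k| ≤ 1 / Nat.factorial k) (t : ℝ) :
    Summable fun k => c k * t ^ k := by
  apply Summable.of_norm
  refine Summable.of_nonneg_of_le (fun k => norm_nonneg _) (fun k => ?_)
    (Real.summable_pow_div_factorial |t|)
  rw [norm_mul, norm_pow, Real.norm_eq_abs, Real.norm_eq_abs]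
  calc |c k| * |t| ^ k ≤ (1 / Nat.factorial k) * |t| ^ k := by
        apply mul_le_mul_of_nonneg_right (h k) (by positivity)
    _ = |t| ^ k / Nat.factorial k := by ring

lemma summable_der (c : ℕ → ℝ) (h : ∀ k, |c k| ≤ 1 / Nat.factorial k) (t : ℝ) :
    Summable fun k => c k * ((k : ℝ) * t ^ (k - 1)) := by
  apply Summable.of_norm
  refine Summable.of_nonneg_of_le (fun k => norm_nonneg _) (fun k => ?_)
    (summable_bnd |t| (abs_nonneg t))
  rw [norm_mul, norm_mul, norm_pow, Real.norm_eq_abs, Real.norm_eq_abs, Real.norm_eq_abs]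
  rw [Nat.abs_cast]
  apply mul_le_mul (h k) le_rfl (by positivity) (by positivity)

lemma hasDerivAt_ser (c : ℕ → ℝ) (h : ∀ k, |c k| ≤ 1 / Nat.factorial k) (t : ℝ) :
    HasDerivAt (fun y => ∑' k, c k * y ^ k) (∑' k, c k * ((k : ℝ) * t ^ (k - 1))) t := by
  have ht : t ∈ Metric.ball (0 : ℝ) (|t| + 1) := by
    simp only [Metric.mem_ball, Real.dist_eq, sub_zero]
    linarith [abs_nonneg t]
  refine hasDerivAt_tsum_of_isPreconnected
    (u := fun k : ℕ => (1 / (Nat.factorial k) : ℝ) * ((k : ℝ) * (|t| + 1) ^ (k - 1)))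
    (g := fun k y => c k * y ^ k) (g' := fun k y => c k * ((k : ℝ) * y ^ (k - 1)))
    (summable_bnd _ (by positivity)) Metric.isOpen_ball
    ((convex_ball _ _).isPreconnected) (fun n y _ => ?_) (fun n y hy => ?_) ht
    (summable_ser c h t) ht
  · exact (hasDerivAt_pow n y).const_mul (c n)
  · have hy' : |y| ≤ |t| + 1 := by
      rw [Metric.mem_ball, Real.dist_eq, sub_zero] at hy; linarith
    rw [norm_mul, norm_mul, norm_pow, Real.norm_eq_abs, Real.norm_eq_abs, Real.norm_eq_abs,
      Nat.abs_cast]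
    apply mul_le_mul (h n) _ (by positivity) (by positivity)
    exact mul_le_mul_of_nonneg_left (pow_le_pow_left₀ (abs_nonneg y) hy' _) (Nat.cast_nonneg n)

lemma asc_le {a b : ℝ} (ha : 0 < a) (hab : a ≤ b) (k : ℕ) :
    (ascPochhammer ℝ k).eval a ≤ (ascPochhammer ℝ k).eval b := by
  induction k with
  | zero => simp
  | succ n ih =>
    rw [ascPochhammer_succ_eval, ascPochhammer_succ_eval]
    have h1 := ascPochhammer_pos n a ha
    have h2 := ascPochhammer_pos n b (lt_of_lt_of_le ha hab)
    apply mul_le_mul ih (by linarith) (by positivity) (by positivity)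

lemma asc_succ_left' (x : ℝ) (k : ℕ) :
    (ascPochhammer ℝ (k + 1)).eval x = x * (ascPochhammer ℝ k).eval (x + 1) := by
  rw [ascPochhammer_succ_left]
  simp [Polynomial.eval_comp]

lemma alg1 (A B B' b α lam kk f : ℝ) (hrel : b * B' = B * (b + kk)) (hb : b = α + lam)
    (hB : B ≠ 0) (hB' : B' ≠ 0) (hb0 : b ≠ 0) (hf : f ≠ 0) (hk : kk + 1 ≠ 0)
    (hbk : b + kk ≠ 0) :
    (kk + 1) * (A * (α + kk) / (B * (b + kk)) / ((kk + 1) * f)) =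
      A / B / f - lam / b * (A / B' / f) := by
  field_simp
  linear_combination (-(A * lam)) * hrel +
    (-(A * b * B')) * hb

lemma alg2 (A B B' b kk f : ℝ) (hrel : b * B' = B * (b + kk))
    (hB : B ≠ 0) (hB' : B' ≠ 0) (hb0 : b ≠ 0) (hf : f ≠ 0) :
    b * (A / B / f - A / B' / f) = kk * (A / B' / f) := by
  field_simp
  linear_combination A * hrel

end KRR

/-- The ratio R(t) = λ M(α; α+λ+1; t) / ((α+λ) M(α; α+λ; t)) satisfies the Riccati
equation t R' = t R² − (α+λ+t) R + λ. -/
theorem kummer_ratio_riccati_laguerre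
    (α lam : ℝ) (hα : 0 < α) (hlam : 0 < lam)
    (I : Set ℝ) (hI : IsOpen I) (hIconn : I.OrdConnected)
    (hM : ∀ t ∈ I, kummerM α (α + lam) t ≠ 0)
    (R : ℝ → ℝ)
    (hR : ∀ t, R t = lam * kummerM α (α + lam + 1) t / ((α + lam) * kummerM α (α + lam) t)) :
    ∀ t ∈ I, t * deriv R t = t * (R t) ^ 2 - (α + lam + t) * R t + lam := by
  intro t ht
  obtain ⟨b, hbdef⟩ : ∃ b : ℝ, b = α + lam := ⟨_, rfl⟩
  rw [show α + lam = b from hbdef.symm] at hM hR ⊢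
  have hb0 : 0 < b := by rw [hbdef]; positivity
  have hbne : b ≠ 0 := hb0.ne'
  have hab : α ≤ b := by rw [hbdef]; linarith
  have hb10 : 0 < b + 1 := by linarith
  have hab' : α ≤ b + 1 := by linarith
  obtain ⟨c₁, hc₁⟩ : ∃ c : ℕ → ℝ, ∀ k,
      c k = (ascPochhammer ℝ k).eval α / (ascPochhammer ℝ k).eval b / Nat.factorial k :=
    ⟨_, fun k => rfl⟩
  obtain ⟨c₂, hc₂⟩ : ∃ c : ℕ → ℝ, ∀ k,
      c k = (ascPochhammer ℝ k).eval α / (ascPochhammer ℝ k).eval (b + 1) / Nat.factorial k :=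
    ⟨_, fun k => rfl⟩
  have hbnd : ∀ β : ℝ, 0 < β → α ≤ β → ∀ k : ℕ,
      |(ascPochhammer ℝ k).eval α / (ascPochhammer ℝ k).eval β / Nat.factorial k|
        ≤ 1 / Nat.factorial k := by
    intro β hβ hαβ k
    have h1 := ascPochhammer_pos k α hα
    have h2 := ascPochhammer_pos k β hβ
    have h3 : (0:ℝ) < Nat.factorial k := by positivity
    have h4 : (ascPochhammer ℝ k).eval α / (ascPochhammer ℝ k).eval β ≤ 1 :=
      (div_le_one h2).mpr (KRR.asc_le hα hαβ k)
    rw [abs_of_nonneg (by positivity)]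
    gcongr
  have hb1 : ∀ k, |c₁ k| ≤ 1 / Nat.factorial k := fun k => (hc₁ k) ▸ hbnd b hb0 hab k
  have hb2 : ∀ k, |c₂ k| ≤ 1 / Nat.factorial k := fun k => (hc₂ k) ▸ hbnd (b + 1) hb10 hab' k
  have hku : ∀ s, kummerM α b s = ∑' k, c₁ k * s ^ k := by
    intro s; unfold kummerM; exact tsum_congr fun k => by rw [hc₁ k]; ring
  have hkv : ∀ s, kummerM α (b + 1) s = ∑' k, c₂ k * s ^ k := by
    intro s; unfold kummerM; exact tsum_congr fun k => by rw [hc₂ k]; ring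
  -- coefficient identities
  have key : ∀ k : ℕ, (((k : ℝ) + 1) * c₁ (k + 1) = c₁ k - lam / b * c₂ k) ∧
      (b * (c₁ k - c₂ k) = (k : ℝ) * c₂ k) := by
    intro k
    have hA := ascPochhammer_pos k α hα
    have hB := ascPochhammer_pos k b hb0
    have hB' := ascPochhammer_pos k (b + 1) hb10
    have hf : (0:ℝ) < Nat.factorial k := by positivity
    have hbk : (0:ℝ) < b + k := by positivity
    have hk1 : ((k : ℝ) + 1) ≠ 0 := by positivity
    have hrel : b * (ascPochhammer ℝ k).eval (b + 1)
        = (ascPochhammer ℝ k).eval b * (b + k) := by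
      rw [← KRR.asc_succ_left' b k, ascPochhammer_succ_eval]
    have hfact : (Nat.factorial (k + 1) : ℝ) = ((k : ℝ) + 1) * Nat.factorial k := by
      rw [Nat.factorial_succ]; push_cast; ring
    constructor
    · rw [hc₁ (k + 1), hc₁ k, hc₂ k, ascPochhammer_succ_eval k α, ascPochhammer_succ_eval k b,
        hfact]
      exact KRR.alg1 _ _ _ _ _ _ _ _ hrel hbdef hB.ne' hB'.ne' hbne hf.ne' hk1 hbk.ne'
    · rw [hc₁ k, hc₂ k]
      exact KRR.alg2 _ _ _ _ _ _ hrel hB.ne' hB'.ne' hbne hf.ne'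
  -- summability
  have Su : ∀ s : ℝ, Summable fun k => c₁ k * s ^ k := KRR.summable_ser c₁ hb1
  have Sv : ∀ s : ℝ, Summable fun k => c₂ k * s ^ k := KRR.summable_ser c₂ hb2
  -- derivatives
  have Hu := KRR.hasDerivAt_ser c₁ hb1 t
  have Hv := KRR.hasDerivAt_ser c₂ hb2 t
  have hDu : (∑' k, c₁ k * ((k : ℝ) * t ^ (k - 1)))
      = (∑' k, c₁ k * t ^ k) - lam / b * (∑' k, c₂ k * t ^ k) := by
    rw [Summable.tsum_eq_zero_add (KRR.summable_der c₁ hb1 t)]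
    simp only [Nat.cast_zero, zero_mul, mul_zero, zero_add]
    have hterm : ∀ n : ℕ, c₁ (n + 1) * ((((n : ℕ) + 1 : ℕ) : ℝ) * t ^ (n + 1 - 1))
        = c₁ n * t ^ n - lam / b * (c₂ n * t ^ n) := by
      intro n
      simp only [Nat.add_sub_cancel, Nat.cast_add, Nat.cast_one]
      linear_combination t ^ n * (key n).1
    rw [tsum_congr hterm, Summable.tsum_sub (Su t) ((Sv t).mul_left (lam / b)), tsum_mul_left]
  have hDv : t * (∑' k, c₂ k * ((k : ℝ) * t ^ (k - 1)))
      = b * ((∑' k, c₁ k * t ^ k) - (∑' k, c₂ k * t ^ k)) := by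
    rw [← tsum_mul_left]
    have hterm : ∀ k : ℕ, t * (c₂ k * ((k : ℝ) * t ^ (k - 1)))
        = b * (c₁ k * t ^ k - c₂ k * t ^ k) := by
      intro k
      cases k with
      | zero => simp [hc₁ 0, hc₂ 0]
      | succ n =>
        have h := (key (n + 1)).2
        simp only [Nat.add_sub_cancel, Nat.cast_add, Nat.cast_one] at h ⊢
        linear_combination (-(t ^ (n + 1))) * h
    rw [tsum_congr hterm, tsum_mul_left, Summable.tsum_sub (Su t) (Sv t)]
  -- assemble
  have hune : (∑' k, c₁ k * t ^ k) ≠ 0 := by rw [← hku t]; exact hM t ht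
  have hbu : b * (∑' k, c₁ k * t ^ k) ≠ 0 := mul_ne_zero hbne hune
  have hR' : R = fun s => lam * (∑' k, c₂ k * s ^ k) / (b * (∑' k, c₁ k * s ^ k)) := by
    funext s; rw [hR s, hku s, hkv s]
  set U := ∑' k, c₁ k * t ^ k with hU
  set V := ∑' k, c₂ k * t ^ k with hV
  set DV := ∑' k, c₂ k * ((k : ℝ) * t ^ (k - 1)) with hDVdef
  have HU' : HasDerivAt (fun s => ∑' k, c₁ k * s ^ k) (U - lam / b * V) t := hDu ▸ Hu
  have HRd : HasDerivAt R
      ((lam * DV * (b * U) - lam * V * (b * (U - lam / b * V))) / (b * U) ^ 2) t := by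
    rw [hR']
    exact (Hv.const_mul lam).div (HU'.const_mul b) hbu
  rw [HRd.deriv, hR t, hku t, hkv t, ← hU, ← hV]
  field_simp
  linear_combination (b * U) * hDv
end

section
/- Let α, β, s, a, b ∈ ℂ and let λ ∈ ℂ satisfy λ² − (α+β+1)λ − b = 0 (i.e. λ = (α+β+1 ± √((α+β+1)² + 4b))/2). Suppose f is holomorphic on an open set U ⊆ ℂ \ {0, 1} and satisfies f''(z) + (s/z² + (α+1)/z + (β+1)/(z−1)) f'(z) − ((bz + a)/((z−1)z²)) f(z) = 0 on U. Define g(u) := u^{−λ} f(1/u) using the principal branch of u^{−λ} on ℂ \ (−∞,0]. Then for every u ∈ ℂ \ (−∞,0] with u ≠ 1 and 1/u ∈ U, g satisfies the confluent Heun equation g''(u) + ((2λ−α−β)/u + (β+1)/(u−1) − s) g'(u) + ((−sλ·u − (λ(α−λ−s) − a))/(u(u−1))) g(u) = 0, i.e. the confluent Heun equation with parameters γ̃ = 2λ−α−β, δ̃ = β+1, ε̃ = −s, α̃ = −sλ, q̃ = λ(α−λ−s) − a. -/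
open Complex

/-- The change of variable u = 1/z, g(u) = u^{-λ} f(1/u) transforms the equation for the
Pollaczek–Jacobi type weight x^α (1-x)^β e^{-t/x} into a confluent Heun equation. -/
theorem pollaczek_jacobi_to_confluent_heun
    (α β s a b lam : ℂ) (hlam : lam ^ 2 - (α + β + 1) * lam - b = 0)
    (U : Set ℂ) (hU : IsOpen U) (hUsub : U ⊆ ({0, 1} : Set ℂ)ᶜ)
    (f : ℂ → ℂ) (hf : DifferentiableOn ℂ f U)
    (hode : ∀ z ∈ U, deriv (deriv f) z
      + (s / z ^ 2 + (α + 1) / z + (β + 1) / (z - 1)) * deriv f z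
      - ((b * z + a) / ((z - 1) * z ^ 2)) * f z = 0)
    (g : ℂ → ℂ) (hg : ∀ u : ℂ, g u = u ^ (-lam) * f (1 / u)) :
    ∀ u ∈ Complex.slitPlane, u ≠ 1 → 1 / u ∈ U →
      deriv (deriv g) u
      + ((2 * lam - α - β) / u + (β + 1) / (u - 1) - s) * deriv g u
      + ((-(s * lam) * u - (lam * (α - lam - s) - a)) / (u * (u - 1))) * g u = 0 := by
  intro u hu hu1 hzU
  have hu0 : u ≠ 0 := slitPlane_ne_zero hu
  have hfa : AnalyticOnNhd ℂ f U := hf.analyticOnNhd hU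
  have hfa' : AnalyticOnNhd ℂ (deriv f) U := hfa.deriv
  -- the open set on which everything is defined
  set V : Set ℂ := {v | v ∈ slitPlane ∧ 1 / v ∈ U} with hVdef
  have hVopen : IsOpen V := by
    rw [isOpen_iff_mem_nhds]
    rintro v ⟨hv1, hv2⟩
    have hv0 : v ≠ 0 := slitPlane_ne_zero hv1
    have hc : ContinuousAt (fun w : ℂ => 1 / w) v := by
      simpa [one_div] using continuousAt_inv₀ hv0
    exact Filter.inter_mem (isOpen_slitPlane.mem_nhds hv1)
      (hc.preimage_mem_nhds (hU.mem_nhds hv2))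
  have huV : u ∈ V := ⟨hu, hzU⟩
  have hinvD : ∀ v : ℂ, v ≠ 0 → HasDerivAt (fun w : ℂ => 1 / w) (-(v ^ 2)⁻¹) v := by
    intro v hv0
    simpa [one_div] using hasDerivAt_inv hv0
  -- first derivative of g on V
  set G1 : ℂ → ℂ := fun v => (-lam * v ^ (-lam - 1)) * f (1 / v)
      + v ^ (-lam) * (deriv f (1 / v) * (-(v ^ 2)⁻¹)) with hG1def
  have key1 : ∀ v ∈ V, HasDerivAt g (G1 v) v := by
    rintro v ⟨hv1, hv2⟩
    have hv0 : v ≠ 0 := slitPlane_ne_zero hv1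
    have h1 : HasDerivAt (fun w : ℂ => w ^ (-lam)) (-lam * v ^ (-lam - 1)) v := by
      have h := HasDerivAt.cpow_const (c := -lam) (hasDerivAt_id v) hv1
      rwa [mul_one] at h
    have h2 : HasDerivAt (fun w : ℂ => f (1 / w)) (deriv f (1 / v) * (-(v ^ 2)⁻¹)) v :=
      ((hfa _ hv2).differentiableAt.hasDerivAt).comp v (hinvD v hv0)
    have hge : g = fun w => w ^ (-lam) * f (1 / w) := funext hg
    rw [hge]
    exact h1.mul h2
  have hderivg : Set.EqOn (deriv g) G1 V := fun v hv => (key1 v hv).deriv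
  -- pieces for the second derivative at u
  have h1 : HasDerivAt (fun w : ℂ => w ^ (-lam)) (-lam * u ^ (-lam - 1)) u := by
    have h := HasDerivAt.cpow_const (c := -lam) (hasDerivAt_id u) hu
    rwa [mul_one] at h
  have h1' : HasDerivAt (fun w : ℂ => w ^ (-lam - 1)) ((-lam - 1) * u ^ (-lam - 2)) u := by
    have h := HasDerivAt.cpow_const (c := -lam - 1) (hasDerivAt_id u) hu
    rwa [mul_one, show -lam - 1 - 1 = -lam - 2 from by ring] at h
  have h2 : HasDerivAt (fun w : ℂ => f (1 / w)) (deriv f (1 / u) * (-(u ^ 2)⁻¹)) u :=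
    ((hfa _ hzU).differentiableAt.hasDerivAt).comp u (hinvD u hu0)
  have h2' : HasDerivAt (fun w : ℂ => deriv f (1 / w))
      (deriv (deriv f) (1 / u) * (-(u ^ 2)⁻¹)) u :=
    ((hfa' _ hzU).differentiableAt.hasDerivAt).comp u (hinvD u hu0)
  have h3 : HasDerivAt (fun w : ℂ => -(w ^ 2)⁻¹) (2 * (u ^ 3)⁻¹) u := by
    have h := ((hasDerivAt_pow 2 u).inv (pow_ne_zero 2 hu0)).neg
    refine h.congr_deriv ?_
    field_simp
    ring
  have hG2 : HasDerivAt G1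
      (((-lam) * ((-lam - 1) * u ^ (-lam - 2))) * f (1 / u)
        + (-lam * u ^ (-lam - 1)) * (deriv f (1 / u) * (-(u ^ 2)⁻¹))
        + ((-lam * u ^ (-lam - 1)) * (deriv f (1 / u) * (-(u ^ 2)⁻¹))
          + u ^ (-lam) * ((deriv (deriv f) (1 / u) * (-(u ^ 2)⁻¹)) * (-(u ^ 2)⁻¹)
            + deriv f (1 / u) * (2 * (u ^ 3)⁻¹)))) u :=
    ((h1'.const_mul (-lam)).mul h2).add (h1.mul (h2'.mul h3))
  have hdd : deriv (deriv g) u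
      = ((-lam) * ((-lam - 1) * u ^ (-lam - 2))) * f (1 / u)
        + (-lam * u ^ (-lam - 1)) * (deriv f (1 / u) * (-(u ^ 2)⁻¹))
        + ((-lam * u ^ (-lam - 1)) * (deriv f (1 / u) * (-(u ^ 2)⁻¹))
          + u ^ (-lam) * ((deriv (deriv f) (1 / u) * (-(u ^ 2)⁻¹)) * (-(u ^ 2)⁻¹)
            + deriv f (1 / u) * (2 * (u ^ 3)⁻¹))) := by
    have heq : deriv g =ᶠ[nhds u] G1 :=
      Filter.eventuallyEq_of_mem (hVopen.mem_nhds huV) hderivg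
    rw [heq.deriv_eq]
    exact hG2.deriv
  have hG1u : deriv g u = (-lam * u ^ (-lam - 1)) * f (1 / u)
      + u ^ (-lam) * (deriv f (1 / u) * (-(u ^ 2)⁻¹)) := hderivg huV
  -- power rewrites
  have e1 : u ^ (-lam - 1) = u ^ (-lam) / u := by
    rw [cpow_sub _ _ hu0, cpow_one]
  have e2 : u ^ (-lam - 2) = u ^ (-lam) / u ^ 2 := by
    rw [cpow_sub _ _ hu0, cpow_two]
  -- nonvanishing
  have hum1 : u - 1 ≠ 0 := sub_ne_zero.mpr hu1
  have h1mu : (1 : ℂ) - u ≠ 0 := sub_ne_zero.mpr (Ne.symm hu1)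
  have hz1 : (1 : ℂ) / u ≠ 1 := by
    intro h
    rw [div_eq_one_iff_eq hu0] at h
    exact hu1 h.symm
  have hz0 : (1 : ℂ) / u ≠ 0 := one_div_ne_zero hu0
  have hz1' : (1 : ℂ) / u - 1 ≠ 0 := sub_ne_zero.mpr hz1
  -- the ODE at z = 1/u, cleared of denominators
  have h0 := hode (1 / u) hzU
  have hP2 : u * (1 - u) * ((1 - u) * deriv (deriv f) (1 / u)
      + ((1 - u) * (s * u ^ 2 + (α + 1) * u) + (β + 1) * u) * deriv f (1 / u)
      - (b + a * u) * u ^ 2 * f (1 / u)) = 0 := by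
    field_simp [h1mu] at h0
    linear_combination u * (1 - u) * h0
  have hP : (1 - u) * deriv (deriv f) (1 / u)
      + ((1 - u) * (s * u ^ 2 + (α + 1) * u) + (β + 1) * u) * deriv f (1 / u)
      - (b + a * u) * u ^ 2 * f (1 / u) = 0 :=
    (mul_eq_zero.mp hP2).resolve_left (mul_ne_zero hu0 h1mu)
  -- assemble
  rw [e1, e2] at hdd
  rw [e1] at hG1u
  set A := u ^ (-lam) with hA
  set F := f (1 / u) with hF
  set F1 := deriv f (1 / u) with hF1
  set F2 := deriv (deriv f) (1 / u) with hF2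
  clear_value A F F1 F2
  have hdd2 : deriv (deriv g) u
      = A * (lam * (lam + 1) * F * u ^ 2 + (2 * lam + 2) * F1 * u + F2) / u ^ 4 := by
    have hv : u * u⁻¹ = 1 := mul_inv_cancel₀ hu0
    rw [hdd]
    linear_combination
      (-((2 * lam * A * F1 + 2 * A * F1) * u⁻¹ ^ 3
        + (lam + lam ^ 2) * A * F * (u * u⁻¹ + 1) * u⁻¹ ^ 2)) * hv
  have hg1 : deriv g u = -(A * (lam * F * u + F1)) / u ^ 2 := by
    have hv : u * u⁻¹ = 1 := mul_inv_cancel₀ hu0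
    rw [hG1u]
    linear_combination (lam * A * F * u⁻¹) * hv
  have hgu : g u = A * F := by rw [hg u, ← hA, ← hF]
  rw [hdd2, hg1, hgu]
  field_simp
  linear_combination (-A) * hP + (A * F * u ^ 2) * hlam
end

section
/- Let α, t ∈ ℂ and n ∈ ℕ. Suppose f is holomorphic on an open set U ⊆ ℂ \ {−1, 1} and satisfies f''(z) + ((α+1)/(z−1) + (α+1)/(z+1) − 2tz) f'(z) − (n(n + 2α + 1 − (2z² − 1)t)/(z² − 1)) f(z) = 0 on U. Define g(u) := f(√u) using the principal branch of the square root on ℂ \ (−∞,0]. Then for every u ∈ ℂ \ (−∞,0] with u ≠ 1 and √u ∈ U, g satisfies the confluent Heun equation g''(u) + (1/(2u) + (α+1)/(u−1) − t) g'(u) + ((2ntu − n(n + 2α + 1 + t))/(4u(u−1))) g(u) = 0, i.e. the confluent Heun equation with parameters γ̃ = 1/2, δ̃ = α+1, ε̃ = −t, α̃ = nt/2, q̃ = n(n+2α+t+1)/4. -/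
open Complex

set_option maxHeartbeats 1000000 in
theorem aux_alg (u z α t nn A B C : ℂ) (hz2 : z * z = u)
    (hu0 : u ≠ 0) (hu1 : u - 1 ≠ 0) (hzm : z - 1 ≠ 0) (hzp : z + 1 ≠ 0)
    (h : A + ((α + 1) / (z - 1) + (α + 1) / (z + 1) - 2 * t * z) * B
      - nn * (nn + 2 * α + 1 - (2 * z ^ 2 - 1) * t) / (z ^ 2 - 1) * C = 0) :
    A * (1 / 2 * (z / u)) * (1 / 2 * (z / u))
      + B * (1 / 2 * ((1 / 2 - 1) * (z / (u * u))))
      + (1 / (2 * u) + (α + 1) / (u - 1) - t) * (B * (1 / 2 * (z / u)))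
      + ((2 * nn * t * u - nn * (nn + 2 * α + 1 + t)) / (4 * u * (u - 1))) * C
      = 0 := by
  rw [div_add_div _ _ hzm hzp,
    show (z - 1) * (z + 1) = u - 1 from by linear_combination hz2,
    show (α + 1) * (z + 1) + (z - 1) * (α + 1) = 2 * (α + 1) * z from by ring,
    show z ^ 2 - 1 = u - 1 from by linear_combination hz2,
    show (2 * z ^ 2 - 1) = 2 * u - 1 from by linear_combination 2 * hz2] at h
  field_simp at h
  field_simp
  ring_nf
  field_simp
  linear_combination (4 * u) * h + (4 * A * (u - 1)) * hz2

/-- The change of variable u = z², g(u) = f(√u) transforms the equation for the weight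
(1-x²)^α e^{-tx²} into a confluent Heun equation. -/
theorem gaussian_jacobi_to_confluent_heun
    (α t : ℂ) (n : ℕ)
    (U : Set ℂ) (hU : IsOpen U) (hUsub : U ⊆ ({-1, 1} : Set ℂ)ᶜ)
    (f : ℂ → ℂ) (hf : DifferentiableOn ℂ f U)
    (hode : ∀ z ∈ U, deriv (deriv f) z
      + ((α + 1) / (z - 1) + (α + 1) / (z + 1) - 2 * t * z) * deriv f z
      - ((n : ℂ) * ((n : ℂ) + 2 * α + 1 - (2 * z ^ 2 - 1) * t) / (z ^ 2 - 1)) * f z = 0)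
    (g : ℂ → ℂ) (hg : ∀ u : ℂ, g u = f (u ^ (1 / 2 : ℂ))) :
    ∀ u ∈ Complex.slitPlane, u ≠ 1 → u ^ (1 / 2 : ℂ) ∈ U →
      deriv (deriv g) u
      + (1 / (2 * u) + (α + 1) / (u - 1) - t) * deriv g u
      + ((2 * (n : ℂ) * t * u - (n : ℂ) * ((n : ℂ) + 2 * α + 1 + t)) / (4 * u * (u - 1)))
          * g u = 0 := by
  have hfa : AnalyticOnNhd ℂ f U := hf.analyticOnNhd hU
  have hfa' : AnalyticOnNhd ℂ (deriv f) U := hfa.deriv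
  have hgf : g = fun u => f (u ^ (1 / 2 : ℂ)) := funext hg
  have key : ∀ v ∈ slitPlane, v ^ (1 / 2 : ℂ) ∈ U →
      HasDerivAt g (deriv f (v ^ (1 / 2 : ℂ)) * ((1 / 2 : ℂ) * v ^ ((1 / 2 : ℂ) - 1))) v := by
    intro v hv hvU
    have hs : HasDerivAt (fun w : ℂ => w ^ (1 / 2 : ℂ))
        ((1 / 2 : ℂ) * v ^ ((1 / 2 : ℂ) - 1)) v :=
      (Complex.hasStrictDerivAt_cpow_const hv).hasDerivAt
    have hfd : HasDerivAt f (deriv f (v ^ (1 / 2 : ℂ))) (v ^ (1 / 2 : ℂ)) :=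
      (hfa _ hvU).differentiableAt.hasDerivAt
    rw [hgf]
    exact hfd.comp v hs
  intro u hu hu1 hzU
  have hu0 : u ≠ 0 := slitPlane_ne_zero hu
  set z := u ^ (1 / 2 : ℂ) with hzdef
  have hz2 : z * z = u := by
    rw [hzdef, ← Complex.cpow_add _ _ hu0]
    norm_num
  have hz0 : z ≠ 0 := by intro h; exact hu0 (by rw [← hz2, h, mul_zero])
  have hu1' : u - 1 ≠ 0 := sub_ne_zero.mpr hu1
  have hzm : z - 1 ≠ 0 := by
    intro h
    exact hu1 (by linear_combination (z + 1) * h - hz2)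
  have hzp : z + 1 ≠ 0 := by
    intro h
    exact hu1 (by linear_combination (z - 1) * h - hz2)
  have e1 : u ^ ((1 / 2 : ℂ) - 1) = z / u := by
    have h12 : ((1 / 2 : ℂ) - 1) = (1 / 2 : ℂ) + (-1) := by ring
    rw [h12, Complex.cpow_add _ _ hu0, Complex.cpow_neg_one, ← hzdef, div_eq_mul_inv]
  have e2 : u ^ ((1 / 2 : ℂ) - 1 - 1) = z / (u * u) := by
    have h12 : ((1 / 2 : ℂ) - 1 - 1) = (1 / 2 : ℂ) + (-1) + (-1) := by ring
    rw [h12, Complex.cpow_add _ _ hu0, Complex.cpow_add _ _ hu0, Complex.cpow_neg_one,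
      ← hzdef]
    field_simp
  have hg1 : HasDerivAt g (deriv f z * ((1 / 2 : ℂ) * (z / u))) u := by
    have h' := key u hu hzU
    rwa [← hzdef, e1] at h'
  have hev : deriv g =ᶠ[nhds u]
      fun v => deriv f (v ^ (1 / 2 : ℂ)) * ((1 / 2 : ℂ) * v ^ ((1 / 2 : ℂ) - 1)) := by
    have hV : (slitPlane ∩ (fun v : ℂ => v ^ (1 / 2 : ℂ)) ⁻¹' U) ∈ nhds u := by
      apply Filter.inter_mem (isOpen_slitPlane.mem_nhds hu)
      exact (continuousAt_cpow_const hu).preimage_mem_nhds (hU.mem_nhds hzU)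
    filter_upwards [hV] with v hv
    exact (key v hv.1 hv.2).deriv
  have hDf' : HasDerivAt (deriv f) (deriv (deriv f) z) z :=
    (hfa' _ hzU).differentiableAt.hasDerivAt
  have hs : HasDerivAt (fun w : ℂ => w ^ (1 / 2 : ℂ))
      ((1 / 2 : ℂ) * u ^ ((1 / 2 : ℂ) - 1)) u :=
    (Complex.hasStrictDerivAt_cpow_const hu).hasDerivAt
  have hcomp : HasDerivAt (fun v => deriv f (v ^ (1 / 2 : ℂ)))
      (deriv (deriv f) z * ((1 / 2 : ℂ) * u ^ ((1 / 2 : ℂ) - 1))) u :=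
    by
      have h' := HasDerivAt.comp u (hDf' : HasDerivAt (deriv f) (deriv (deriv f) z) (u ^ (1 / 2 : ℂ))) hs
      exact h'
  have hpow : HasDerivAt (fun v : ℂ => (1 / 2 : ℂ) * v ^ ((1 / 2 : ℂ) - 1))
      ((1 / 2 : ℂ) * (((1 / 2 : ℂ) - 1) * u ^ ((1 / 2 : ℂ) - 1 - 1))) u :=
    HasDerivAt.const_mul _
      (Complex.hasStrictDerivAt_cpow_const (c := (1 / 2 : ℂ) - 1) hu).hasDerivAt
  have hg2 : HasDerivAt (fun v => deriv f (v ^ (1 / 2 : ℂ)) *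
        ((1 / 2 : ℂ) * v ^ ((1 / 2 : ℂ) - 1)))
      (deriv (deriv f) z * ((1 / 2 : ℂ) * u ^ ((1 / 2 : ℂ) - 1)) *
          ((1 / 2 : ℂ) * u ^ ((1 / 2 : ℂ) - 1))
        + deriv f z * ((1 / 2 : ℂ) * (((1 / 2 : ℂ) - 1) * u ^ ((1 / 2 : ℂ) - 1 - 1)))) u := by
    have h' := hcomp.mul hpow
    rw [← hzdef] at h'
    exact h'
  have hd2 : deriv (deriv g) u
      = deriv (deriv f) z * ((1 / 2 : ℂ) * (z / u)) * ((1 / 2 : ℂ) * (z / u))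
        + deriv f z * ((1 / 2 : ℂ) * (((1 / 2 : ℂ) - 1) * (z / (u * u)))) := by
    rw [hev.deriv_eq, ← e1, ← e2]
    exact hg2.deriv
  have hd1 : deriv g u = deriv f z * ((1 / 2 : ℂ) * (z / u)) := hg1.deriv
  have hgu : g u = f z := hg u
  have h0 := hode z hzU
  rw [hd2, hd1, hgu]
  exact aux_alg u z α t (n : ℂ) (deriv (deriv f) z) (deriv f z) (f z)
    hz2 hu0 hu1' hzm hzp h0
end

section
/- Let a > 0, n ∈ ℕ, and set t := a². Suppose f is holomorphic on an open set U ⊆ ℂ \ {0, a, −a} and satisfies f''(z) + (2a²/(z(z² − a²)) − 2z) f'(z) + ((2nz² + √(2n)·a)/(z² − a²)) f(z) = 0 on U. Define g(u) := f(a√u) using the principal branch of the square root on ℂ \ (−∞,0]. Then for every u ∈ ℂ \ (−∞,0] with u ≠ 1 and a√u ∈ U, g satisfies the confluent Heun equation g''(u) + (1/(u−1) − 1/(2u) − t) g'(u) + ((2ntu + √(2nt))/(4u(u−1))) g(u) = 0. -/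
open Complex

/-- Algebraic core: the transformed ODE coefficients satisfy the confluent Heun relation. -/
private lemma heun_algebra_core (a s c v d r nn : ℂ) (ha0 : a ≠ 0) (hs0 : s ≠ 0)
    (hs1 : s ^ 2 - 1 ≠ 0)
    (h : d + (2 * a ^ 2 / (a * s * (a ^ 2 * (s ^ 2 - 1))) - 2 * (a * s)) * c
      + (2 * nn * (a ^ 2 * s ^ 2) + r * a) / (a ^ 2 * (s ^ 2 - 1)) * v = 0) :
    d * a ^ 2 / (4 * s ^ 2) - c * a / (4 * s ^ 3)
      + (1 / (s ^ 2 - 1) - 1 / (2 * s ^ 2) - a ^ 2) * (c * a / (2 * s))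
      + (2 * nn * a ^ 2 * s ^ 2 + r * a) / (4 * s ^ 2 * (s ^ 2 - 1)) * v = 0 := by
  have hM : (4:ℂ) * s ^ 3 * (s ^ 2 - 1) ≠ 0 :=
    mul_ne_zero (mul_ne_zero (by norm_num) (pow_ne_zero _ hs0)) hs1
  have h1 : (4:ℂ) * s ^ 2 ≠ 0 := mul_ne_zero (by norm_num) (pow_ne_zero _ hs0)
  have h2 : (4:ℂ) * s ^ 3 ≠ 0 := mul_ne_zero (by norm_num) (pow_ne_zero _ hs0)
  have h3 : (2:ℂ) * s ≠ 0 := mul_ne_zero (by norm_num) hs0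
  have h4 : (2:ℂ) * s * (s ^ 2 - 1) ≠ 0 := mul_ne_zero h3 hs1
  have h5 : (4:ℂ) * s ^ 2 * (s ^ 2 - 1) ≠ 0 := mul_ne_zero h1 hs1
  have e0 : (2 * nn * a ^ 2 * s ^ 2 + r * a) / (4 * s ^ 2 * (s ^ 2 - 1)) * v
      = (2 * nn * a ^ 2 * s ^ 2 + r * a) / (4 * s ^ 2) / (s ^ 2 - 1) * v := by rw [div_div]
  rw [e0]
  have expand : d * a ^ 2 / (4 * s ^ 2) - c * a / (4 * s ^ 3)
      + (1 / (s ^ 2 - 1) - 1 / (2 * s ^ 2) - a ^ 2) * (c * a / (2 * s))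
      + (2 * nn * a ^ 2 * s ^ 2 + r * a) / (4 * s ^ 2) / (s ^ 2 - 1) * v
      = d * a ^ 2 / (4 * s ^ 2) - c * a / (4 * s ^ 3)
      + (c * a / (2 * s)) / (s ^ 2 - 1) - c * a / (4 * s ^ 3) - a ^ 3 * c / (2 * s)
      + ((2 * nn * a ^ 2 * s ^ 2 + r * a) * v / (4 * s ^ 2)) / (s ^ 2 - 1) := by
    ring
  rw [expand, div_div, div_div]
  have t1 : d * a ^ 2 / (4 * s ^ 2)
      = d * a ^ 2 * s * (s ^ 2 - 1) / (4 * s ^ 3 * (s ^ 2 - 1)) := by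
    rw [div_eq_div_iff h1 hM]; ring
  have t2 : c * a / (4 * s ^ 3) = c * a * (s ^ 2 - 1) / (4 * s ^ 3 * (s ^ 2 - 1)) := by
    rw [div_eq_div_iff h2 hM]; ring
  have t3 : c * a / (2 * s * (s ^ 2 - 1))
      = c * a * (2 * s ^ 2) / (4 * s ^ 3 * (s ^ 2 - 1)) := by
    rw [div_eq_div_iff h4 hM]; ring
  have t5 : a ^ 3 * c / (2 * s)
      = a ^ 3 * c * (2 * s ^ 2 * (s ^ 2 - 1)) / (4 * s ^ 3 * (s ^ 2 - 1)) := by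
    rw [div_eq_div_iff h3 hM]; ring
  have t6 : (2 * nn * a ^ 2 * s ^ 2 + r * a) * v / (4 * s ^ 2 * (s ^ 2 - 1))
      = (2 * nn * a ^ 2 * s ^ 2 + r * a) * v * s / (4 * s ^ 3 * (s ^ 2 - 1)) := by
    rw [div_eq_div_iff h5 hM]; ring
  rw [t1, t2, t3, t5, t6, div_sub_div_same, ← add_div, div_sub_div_same,
    div_sub_div_same, ← add_div, div_eq_zero_iff]
  left
  have hP : a ^ 3 * (s ^ 2 - 1) * (d * a ^ 2 * s * (s ^ 2 - 1) - c * a * (s ^ 2 - 1)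
      + c * a * (2 * s ^ 2) - c * a * (s ^ 2 - 1)
      - a ^ 3 * c * (2 * s ^ 2 * (s ^ 2 - 1))
      + (2 * nn * a ^ 2 * s ^ 2 + r * a) * v * s) = 0 := by
    field_simp at h
    linear_combination (a ^ 4 * (s ^ 2 - 1)) * h
  rcases mul_eq_zero.mp hP with hbad | hgood
  · exact absurd hbad (mul_ne_zero (pow_ne_zero _ ha0) hs1)
  · linear_combination hgood

/-- The change of variable z = a√u, t = a², transforms the large-n equation for the
Gaussian weight with a gap, e^{-x²}(1 - χ_{(-a,a)}(x)), into a confluent Heun equation. -/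
theorem gaussian_gap_to_confluent_heun
    (a : ℝ) (ha : 0 < a) (n : ℕ) (t : ℝ) (ht : t = a ^ 2)
    (U : Set ℂ) (hU : IsOpen U) (hUsub : U ⊆ ({0, (a : ℂ), -(a : ℂ)} : Set ℂ)ᶜ)
    (f : ℂ → ℂ) (hf : DifferentiableOn ℂ f U)
    (hode : ∀ z ∈ U, deriv (deriv f) z
      + (2 * (a : ℂ) ^ 2 / (z * (z ^ 2 - (a : ℂ) ^ 2)) - 2 * z) * deriv f z
      + ((2 * (n : ℂ) * z ^ 2 + (Real.sqrt (2 * n) : ℂ) * (a : ℂ))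
          / (z ^ 2 - (a : ℂ) ^ 2)) * f z = 0)
    (g : ℂ → ℂ) (hg : ∀ u : ℂ, g u = f ((a : ℂ) * u ^ (1 / 2 : ℂ))) :
    ∀ u ∈ Complex.slitPlane, u ≠ 1 → (a : ℂ) * u ^ (1 / 2 : ℂ) ∈ U →
      deriv (deriv g) u
      + (1 / (u - 1) - 1 / (2 * u) - (t : ℂ)) * deriv g u
      + ((2 * (n : ℂ) * (t : ℂ) * u + (Real.sqrt (2 * n * t) : ℂ))
          / (4 * u * (u - 1))) * g u = 0 := by
  intro u hu hu1 hzU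
  -- analyticity of f and its derivative
  have hfa : AnalyticOnNhd ℂ f U := hf.analyticOnNhd hU
  have hfa' : AnalyticOnNhd ℂ (deriv f) U := hfa.deriv
  set φ : ℂ → ℂ := fun w => (a : ℂ) * w ^ (1 / 2 : ℂ) with hφdef
  have hgf : g = f ∘ φ := funext fun w => hg w
  -- the open set V
  have hφcont : ContinuousOn φ Complex.slitPlane := fun w hw =>
    (((Complex.hasStrictDerivAt_cpow_const hw).hasDerivAt.const_mul
      (a : ℂ)).differentiableAt.continuousAt).continuousWithinAt
  set V : Set ℂ := Complex.slitPlane ∩ φ ⁻¹' U with hVdef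
  have hVopen : IsOpen V := hφcont.isOpen_inter_preimage Complex.isOpen_slitPlane hU
  have huV : u ∈ V := ⟨hu, hzU⟩
  -- first derivative of g on V
  set h : ℂ → ℂ := fun w =>
    deriv f (φ w) * ((a : ℂ) * ((1 / 2 : ℂ) * w ^ ((1 / 2 : ℂ) - 1))) with hhdef
  have hφderiv : ∀ w ∈ Complex.slitPlane,
      HasDerivAt φ ((a : ℂ) * ((1 / 2 : ℂ) * w ^ ((1 / 2 : ℂ) - 1))) w := fun w hw =>
    (Complex.hasStrictDerivAt_cpow_const hw).hasDerivAt.const_mul (a : ℂ)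
  have hgderiv : ∀ w ∈ V, HasDerivAt g (h w) w := by
    intro w hw
    have hfd : HasDerivAt f (deriv f (φ w)) (φ w) :=
      ((hfa (φ w) hw.2).differentiableAt).hasDerivAt
    rw [hgf]
    exact hfd.comp w (hφderiv w hw.1)
  have hdg : Set.EqOn (deriv g) h V := fun w hw => (hgderiv w hw).deriv
  -- second derivative of g at u
  have hdd : deriv (deriv g) u = deriv h u := by
    apply Filter.EventuallyEq.deriv_eq
    filter_upwards [hVopen.mem_nhds huV] with w hw using hdg hw
  have hfd2 : HasDerivAt (deriv f) (deriv (deriv f) (φ u)) (φ u) :=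
    ((hfa' (φ u) hzU).differentiableAt).hasDerivAt
  have H1 : HasDerivAt (fun w => deriv f (φ w))
      (deriv (deriv f) (φ u) * ((a : ℂ) * ((1 / 2 : ℂ) * u ^ ((1 / 2 : ℂ) - 1)))) u :=
    hfd2.comp u (hφderiv u hu)
  have H2 : HasDerivAt (fun w : ℂ => (a : ℂ) * ((1 / 2 : ℂ) * w ^ ((1 / 2 : ℂ) - 1)))
      ((a : ℂ) * ((1 / 2 : ℂ) * (((1 / 2 : ℂ) - 1) * u ^ ((1 / 2 : ℂ) - 1 - 1)))) u := by
    exact (((Complex.hasStrictDerivAt_cpow_const (c := (1/2 : ℂ) - 1) hu).hasDerivAt).const_mul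
      ((1/2 : ℂ))).const_mul (a : ℂ)
  have Hh : HasDerivAt h
      (deriv (deriv f) (φ u) * ((a : ℂ) * ((1 / 2 : ℂ) * u ^ ((1 / 2 : ℂ) - 1)))
        * ((a : ℂ) * ((1 / 2 : ℂ) * u ^ ((1 / 2 : ℂ) - 1)))
      + deriv f (φ u)
        * ((a : ℂ) * ((1 / 2 : ℂ) * (((1 / 2 : ℂ) - 1) * u ^ ((1 / 2 : ℂ) - 1 - 1))))) u :=
    H1.mul H2
  -- basic nonvanishing facts
  have hu0 : u ≠ 0 := Complex.slitPlane_ne_zero hu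
  set s : ℂ := u ^ (1 / 2 : ℂ) with hsdef
  have hs2 : s * s = u := by
    rw [hsdef, ← Complex.cpow_add _ _ hu0]
    norm_num
  have hs2' : s ^ 2 = u := by rw [sq, hs2]
  have hs0 : s ≠ 0 := by
    intro h0
    rw [h0, mul_zero] at hs2
    exact hu0 hs2.symm
  have ha0 : (a : ℂ) ≠ 0 := by exact_mod_cast ha.ne'
  have hum1 : u - 1 ≠ 0 := sub_ne_zero.mpr hu1
  have hs1 : s ^ 2 - 1 ≠ 0 := by rw [hs2']; exact hum1
  -- rewrite cpow exponents
  have e1 : u ^ ((1 / 2 : ℂ) - 1) = s⁻¹ := by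
    rw [show (1 / 2 : ℂ) - 1 = -(1 / 2) by norm_num, Complex.cpow_neg, hsdef]
  have e2 : u ^ ((1 / 2 : ℂ) - 1 - 1) = s⁻¹ / u := by
    rw [Complex.cpow_sub _ _ hu0, e1, Complex.cpow_one]
  -- the sqrt identity
  have hsqrt : (Real.sqrt (2 * n * t) : ℂ) = (Real.sqrt (2 * n) : ℂ) * (a : ℂ) := by
    rw [ht, Real.sqrt_mul (by positivity) (a ^ 2), Real.sqrt_sq ha.le]
    push_cast
    ring
  have htC : (t : ℂ) = (a : ℂ) ^ 2 := by rw [ht]; push_cast; ring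
  -- the original ODE at z = a * s
  have hode' := hode (φ u) hzU
  have hz : φ u = (a : ℂ) * s := rfl
  have hz2 : ((a : ℂ) * s) ^ 2 = (a : ℂ) ^ 2 * s ^ 2 := by rw [mul_pow]
  have hz2a : ((a : ℂ) * s) ^ 2 - (a : ℂ) ^ 2 = (a : ℂ) ^ 2 * (s ^ 2 - 1) := by
    rw [hz2]; ring
  rw [hz] at hode'
  rw [hz2a, hz2] at hode'
  -- explicit formulas for the derivatives of g
  have hderiv_g : deriv g u = deriv f ((a : ℂ) * s) * (a : ℂ) / (2 * s) := by
    have hw := hdg huV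
    rw [hhdef] at hw
    simp only at hw
    rw [hw, hz, e1]
    ring
  have hderiv2_g : deriv (deriv g) u =
      deriv (deriv f) ((a : ℂ) * s) * (a : ℂ) ^ 2 / (4 * s ^ 2)
      - deriv f ((a : ℂ) * s) * (a : ℂ) / (4 * s ^ 3) := by
    rw [hdd, Hh.deriv, hz, e1, e2, show u = s ^ 2 from hs2'.symm]
    ring
  have hgu : g u = f ((a : ℂ) * s) := hg u
  -- assemble and conclude via the algebraic core
  rw [hderiv2_g, hderiv_g, hgu, htC, hsqrt, show u = s ^ 2 from hs2'.symm]
  have hode2 : deriv (deriv f) ((a : ℂ) * s)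
      + (2 * (a : ℂ) ^ 2 / ((a : ℂ) * s * ((a : ℂ) ^ 2 * (s ^ 2 - 1))) - 2 * ((a : ℂ) * s))
          * deriv f ((a : ℂ) * s)
      + (2 * (n : ℂ) * ((a : ℂ) ^ 2 * s ^ 2) + (Real.sqrt (2 * n) : ℂ) * (a : ℂ))
          / ((a : ℂ) ^ 2 * (s ^ 2 - 1)) * f ((a : ℂ) * s) = 0 := hode'
  exact heun_algebra_core (a : ℂ) s (deriv f ((a : ℂ) * s)) (f ((a : ℂ) * s))
    (deriv (deriv f) ((a : ℂ) * s)) ((Real.sqrt (2 * n) : ℂ)) (n : ℂ) ha0 hs0 hs1 hode2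
end
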